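/- arXiv:1409.8566 — 8 statements merged into one kernel-verified Lean document; each statement's English description precedes it below -/
import Mathlib

section
/- For every vector a = (a_1,…,a_n) of nonnegative integers, the number T_n(a) of Tesler matrices with hook sums a equals the Kostant partition function value K_{A_n}(a_1,…,a_n,−Σ_{i=1}^n a_i), i.e., the number of n×n upper triangular matrices with nonnegative integer entries whose k-th hook sum equals a_k for all k equals the number of functions m : {(i,j) : 1 ≤ i < j ≤ n+1} → ℕ such that Σ_{1≤i<j≤n+1} m(i,j)·(e_i − e_j) = (a_1,…,a_n,−Σ_{i=1}^n a_i) in ℤ^{n+1}. -/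
open Finset

/-- A Tesler matrix with hook sums `a`: an `n × n` upper triangular matrix with
nonnegative integer entries whose `k`-th hook sum equals `a k`. -/
def IsTeslerMatrix (n : ℕ) (a : Fin n → ℕ) (b : Fin n → Fin n → ℕ) : Prop :=
  (∀ i j : Fin n, j < i → b i j = 0) ∧
  (∀ k : Fin n,
    (∑ j ∈ univ.filter (fun j => k ≤ j), (b k j : ℤ))
      - (∑ i ∈ univ.filter (fun i => i < k), (b i k : ℤ)) = (a k : ℤ))

/-- The Kostant partition function of type `A_n`: the number of ways to write
`b ∈ ℤ^{n+1}` as an `ℕ`-combination of the positive roots `e_i - e_j`,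
`1 ≤ i < j ≤ n+1`.  The multiplicity function `m` is recorded as a function on all
pairs, vanishing off the set `{(i,j) : i < j}`. -/
noncomputable def kostant (n : ℕ) (b : Fin (n+1) → ℤ) : ℕ :=
  Nat.card {m : Fin (n+1) → Fin (n+1) → ℕ //
    (∀ i j : Fin (n+1), ¬ i < j → m i j = 0) ∧
    (∑ i : Fin (n+1), ∑ j : Fin (n+1),
      (m i j : ℤ) • (Pi.single i (1 : ℤ) - Pi.single j (1 : ℤ))) = b}

lemma kostant_sum_apply (n : ℕ) (m : Fin (n+1) → Fin (n+1) → ℕ) (k : Fin (n+1)) :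
    ((∑ i : Fin (n+1), ∑ j : Fin (n+1),
      (m i j : ℤ) • (Pi.single i (1 : ℤ) - Pi.single j (1 : ℤ))) : Fin (n+1) → ℤ) k
      = (∑ j, (m k j : ℤ)) - ∑ i, (m i k : ℤ) := by
  simp [Finset.sum_apply, Pi.single_apply, mul_sub, Finset.sum_sub_distrib,
    Finset.sum_ite_eq, Finset.sum_ite_eq', mul_ite, mul_comm]

lemma filter_le_sum {n : ℕ} (k : Fin n) (f : Fin n → ℤ) :
    ∑ j ∈ univ.filter (fun j => k ≤ j), f j
      = f k + ∑ j ∈ univ.filter (fun j => k < j), f j := by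
  have h : univ.filter (fun j => k ≤ j) = insert k (univ.filter (fun j => k < j)) := by
    ext j
    simp only [mem_filter, mem_univ, true_and, Finset.mem_insert, Fin.le_def, Fin.lt_def]
    omega
  rw [h, Finset.sum_insert (by simp)]

def toM (n : ℕ) (b : Fin n → Fin n → ℕ) (i j : Fin (n+1)) : ℕ :=
  if h : (i : ℕ) < n ∧ i < j then
    if h2 : (j : ℕ) < n then b ⟨i, h.1⟩ ⟨j, h2⟩ else b ⟨i, h.1⟩ ⟨i, h.1⟩
  else 0

def toB (n : ℕ) (m : Fin (n+1) → Fin (n+1) → ℕ) (i j : Fin n) : ℕ :=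
  if i = j then m i.castSucc (Fin.last n) else m i.castSucc j.castSucc

lemma toM_cc {n : ℕ} (b : Fin n → Fin n → ℕ) (i j : Fin n) :
    toM n b i.castSucc j.castSucc = if i < j then b i j else 0 := by
  by_cases h : i < j
  · rw [toM, dif_pos ⟨by simp, by simpa using h⟩, dif_pos (by simp), if_pos h]
    exact congrArg₂ b (Fin.ext (by simp)) (Fin.ext (by simp))
  · rw [toM, dif_neg (by rintro ⟨-, hh⟩; exact h (by simpa using hh)), if_neg h]

lemma toM_cl {n : ℕ} (b : Fin n → Fin n → ℕ) (i : Fin n) :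
    toM n b i.castSucc (Fin.last n) = b i i := by
  rw [toM, dif_pos ⟨by simp, Fin.castSucc_lt_last i⟩, dif_neg (by simp)]
  exact congrArg₂ b (Fin.ext (by simp)) (Fin.ext (by simp))

lemma toM_last {n : ℕ} (b : Fin n → Fin n → ℕ) (j : Fin (n+1)) :
    toM n b (Fin.last n) j = 0 := by
  rw [toM, dif_neg (by simp)]

lemma toM_mem (n : ℕ) (a : Fin n → ℕ) (b : Fin n → Fin n → ℕ) (hb : IsTeslerMatrix n a b) :
    (∀ i j : Fin (n+1), ¬ i < j → toM n b i j = 0) ∧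
    ((∑ i : Fin (n+1), ∑ j : Fin (n+1),
      (toM n b i j : ℤ) • (Pi.single i (1 : ℤ) - Pi.single j (1 : ℤ))) : Fin (n+1) → ℤ)
      = fun k : Fin (n+1) => if h : (k : ℕ) < n then (a ⟨k, h⟩ : ℤ) else -(∑ i : Fin n, (a i : ℤ)) := by
  obtain ⟨hb0, hb1⟩ := hb
  refine ⟨fun i j hij => by rw [toM, dif_neg (fun h => hij h.2)], ?_⟩
  funext k
  rw [kostant_sum_apply]
  induction k using Fin.lastCases with
  | last =>
    have hrow : ∑ j, (toM n b (Fin.last n) j : ℤ) = 0 := by simp [toM_last]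
    have hcol : ∑ i : Fin (n+1), (toM n b i (Fin.last n) : ℤ) = ∑ i : Fin n, (b i i : ℤ) := by
      rw [Fin.sum_univ_castSucc]
      simp [toM_cl, toM_last]
    rw [hrow, hcol]
    have hswap : ∑ k : Fin n, ∑ j ∈ univ.filter (fun j => k < j), (b k j : ℤ)
        = ∑ k : Fin n, ∑ i ∈ univ.filter (fun i => i < k), (b i k : ℤ) := by
      simp only [Finset.sum_filter]
      exact Finset.sum_comm
    have h2 : ∑ k : Fin n, ((b k k : ℤ) + ∑ j ∈ univ.filter (fun j => k < j), (b k j : ℤ)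
        - ∑ i ∈ univ.filter (fun i => i < k), (b i k : ℤ)) = ∑ k : Fin n, (a k : ℤ) := by
      refine Finset.sum_congr rfl fun k _ => ?_
      rw [← filter_le_sum k (fun j => (b k j : ℤ))]
      exact hb1 k
    rw [Finset.sum_sub_distrib, Finset.sum_add_distrib, hswap, add_sub_cancel_right] at h2
    simp [h2]
  | cast k =>
    have hrow : ∑ j : Fin (n+1), (toM n b k.castSucc j : ℤ)
        = ∑ j ∈ univ.filter (fun j => k ≤ j), (b k j : ℤ) := by
      rw [Fin.sum_univ_castSucc]
      simp only [toM_cc, toM_cl]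
      rw [filter_le_sum k (fun j => (b k j : ℤ)), Finset.sum_filter]
      push_cast
      ring
    have hcol : ∑ i : Fin (n+1), (toM n b i k.castSucc : ℤ)
        = ∑ i ∈ univ.filter (fun i => i < k), (b i k : ℤ) := by
      rw [Fin.sum_univ_castSucc]
      simp only [toM_cc, toM_last]
      rw [Finset.sum_filter]
      push_cast
      simp
    rw [hrow, hcol]
    simpa using hb1 k

lemma toB_mem (n : ℕ) (a : Fin n → ℕ) (m : Fin (n+1) → Fin (n+1) → ℕ)
    (hm0 : ∀ i j : Fin (n+1), ¬ i < j → m i j = 0)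
    (hm1 : ((∑ i : Fin (n+1), ∑ j : Fin (n+1),
      (m i j : ℤ) • (Pi.single i (1 : ℤ) - Pi.single j (1 : ℤ))) : Fin (n+1) → ℤ)
      = fun k : Fin (n+1) => if h : (k : ℕ) < n then (a ⟨k, h⟩ : ℤ) else -(∑ i : Fin n, (a i : ℤ))) :
    IsTeslerMatrix n a (toB n m) := by
  constructor
  · intro i j hji
    rw [toB, if_neg (fun h => absurd h.symm (ne_of_lt hji)),
      hm0 _ _ (by simpa using not_lt.2 hji.le)]
  · intro k
    have hk := congrFun hm1 k.castSucc
    rw [kostant_sum_apply] at hk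
    simp only [Fin.coe_castSucc, k.isLt, dif_pos, Fin.eta] at hk
    have hrow : ∑ j ∈ univ.filter (fun j => k ≤ j), ((toB n m) k j : ℤ)
        = ∑ j : Fin (n+1), (m k.castSucc j : ℤ) := by
      rw [filter_le_sum, Fin.sum_univ_castSucc]
      have h1 : (toB n m k k : ℤ) = (m k.castSucc (Fin.last n) : ℤ) := by
        rw [toB, if_pos rfl]
      have h2 : ∑ j ∈ univ.filter (fun j => k < j), ((toB n m) k j : ℤ)
          = ∑ j : Fin n, (m k.castSucc j.castSucc : ℤ) := by
        rw [Finset.sum_filter]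
        refine Finset.sum_congr rfl fun j _ => ?_
        by_cases h : k < j
        · rw [if_pos h, toB, if_neg (ne_of_lt h)]
        · rw [if_neg h, hm0 _ _ (by simpa using h)]
          simp
      rw [h1, h2]
      ring
    have hcol : ∑ i ∈ univ.filter (fun i => i < k), ((toB n m) i k : ℤ)
        = ∑ i : Fin (n+1), (m i k.castSucc : ℤ) := by
      rw [Fin.sum_univ_castSucc, hm0 _ _ (lt_asymm (Fin.castSucc_lt_last k))]
      rw [Finset.sum_filter]
      push_cast
      rw [add_zero]
      refine Finset.sum_congr rfl fun i _ => ?_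
      by_cases h : i < k
      · rw [if_pos h, toB, if_neg (ne_of_lt h)]
      · rw [if_neg h, hm0 _ _ (by simpa using h)]
        simp
    rw [hrow, hcol]
    exact hk

lemma toB_toM (n : ℕ) (b : Fin n → Fin n → ℕ) (hb0 : ∀ i j : Fin n, j < i → b i j = 0) :
    toB n (toM n b) = b := by
  funext i j
  rw [toB]
  by_cases h : i = j
  · subst h
    rw [if_pos rfl, toM_cl]
  · rw [if_neg h, toM_cc]
    by_cases h2 : i < j
    · rw [if_pos h2]
    · rw [if_neg h2]
      exact (hb0 i j (lt_of_le_of_ne (not_lt.1 h2) fun hh => h hh.symm)).symm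

lemma toM_toB (n : ℕ) (m : Fin (n+1) → Fin (n+1) → ℕ)
    (hm0 : ∀ i j : Fin (n+1), ¬ i < j → m i j = 0) :
    toM n (toB n m) = m := by
  funext i j
  by_cases h : (i : ℕ) < n ∧ i < j
  · rw [toM, dif_pos h]
    by_cases h2 : (j : ℕ) < n
    · rw [dif_pos h2, toB, if_neg (by
        intro hh
        have h3 : (i : ℕ) = (j : ℕ) := by simpa using congrArg Fin.val hh
        have h4 : (i : ℕ) < (j : ℕ) := h.2
        omega)]
      exact congrArg₂ m (Fin.ext (by simp)) (Fin.ext (by simp))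
    · rw [dif_neg h2, toB, if_pos rfl]
      have hj : j = Fin.last n := Fin.ext (by have := j.isLt; simp; omega)
      subst hj
      exact congrArg₂ m (Fin.ext (by simp)) rfl
  · rw [toM, dif_neg h]
    refine (hm0 i j fun hij => h ⟨?_, hij⟩).symm
    have h1 : (i : ℕ) < (j : ℕ) := hij
    have h2 := j.isLt
    omega

/-- The number of Tesler matrices with hook sums `(a_1, …, a_n)` equals the Kostant
partition function evaluated at `(a_1, …, a_n, -∑ a_i)`. -/
theorem card_teslerMatrices_eq_kostant (n : ℕ) (a : Fin n → ℕ) :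
    Nat.card {b : Fin n → Fin n → ℕ // IsTeslerMatrix n a b} =
      kostant n (fun k =>
        if h : (k : ℕ) < n then (a ⟨k, h⟩ : ℤ) else -(∑ i : Fin n, (a i : ℤ))) := by
  rw [kostant]
  exact Nat.card_congr
    { toFun := fun x => ⟨toM n x.1, toM_mem n a x.1 x.2⟩
      invFun := fun y => ⟨toB n y.1, toB_mem n a y.1 y.2.1 y.2.2⟩
      left_inv := fun x => Subtype.ext (toB_toM n x.1 x.2.1)
      right_inv := fun y => Subtype.ext (toM_toB n y.1 y.2.1) }
end

section
/- Let a = (a_1,…,a_n) be a vector of nonnegative integers with a_1 > 0 and set s = (a_1, a_1+a_2, …, Σ_{i=1}^n a_i). Then the set F_n = { M ∈ Trans_n(s) : m_{i,j} = 0 whenever i − j ≥ 2 } is a face of the transportation polytope Trans_n(s), and there is an affine bijection from the Tesler polytope Tes_n(a) onto F_n. -/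
open Finset

/-- The Tesler polytope `Tes_n(a)`: upper triangular `n × n` matrices with nonnegative
real entries whose `k`-th hook sum equals `a k`.  Entries strictly below the diagonal
are required to be `0`. -/
def TeslerPolytope (n : ℕ) (a : Fin n → ℕ) : Set (Fin n → Fin n → ℝ) :=
  {x | (∀ i j : Fin n, j < i → x i j = 0) ∧
       (∀ i j : Fin n, i ≤ j → 0 ≤ x i j) ∧
       (∀ k : Fin n,
         (∑ j ∈ univ.filter (fun j => k ≤ j), x k j)
           - (∑ i ∈ univ.filter (fun i => i < k), x i k) = (a k : ℝ))}

/-- The transportation polytope `Trans_n(s)`: `n × n` matrices with nonnegative real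
entries whose `i`-th row sum and `i`-th column sum both equal `s i`. -/
def TransPolytope (n : ℕ) (s : Fin n → ℕ) : Set (Fin n → Fin n → ℝ) :=
  {M | (∀ i j : Fin n, 0 ≤ M i j) ∧
       (∀ i : Fin n, ∑ j : Fin n, M i j = (s i : ℝ)) ∧
       (∀ i : Fin n, ∑ j : Fin n, M j i = (s i : ℝ))}

namespace TeslerFaceAux

variable {n : ℕ}

noncomputable def sA (a : Fin n → ℕ) (k : Fin n) : ℝ :=
  ∑ i ∈ univ.filter (fun i => i ≤ k), (a i : ℝ)

lemma sA_eq (a : Fin n → ℕ) (k : Fin n) :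
    ((∑ i ∈ univ.filter (fun i => i ≤ k), a i : ℕ) : ℝ) = sA a k := by
  simp [sA]

lemma sA_zero (a : Fin n → ℕ) (i : Fin n) (hi : (i : ℕ) = 0) : sA a i = (a i : ℝ) := by
  have h : univ.filter (fun k => k ≤ i) = {i} := by
    ext k
    simp only [mem_filter, mem_univ, true_and, mem_singleton, Fin.le_def, Fin.ext_iff]
    omega
  rw [sA, h, sum_singleton]

lemma sA_succ (a : Fin n → ℕ) (K i : Fin n) (h : (i : ℕ) = (K : ℕ) + 1) :
    sA a i = sA a K + (a i : ℝ) := by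
  have hset : univ.filter (fun k => k ≤ i) = insert i (univ.filter (fun k => k ≤ K)) := by
    ext k
    simp only [mem_filter, mem_univ, true_and, mem_insert, Fin.le_def, Fin.ext_iff]
    omega
  have hnot : i ∉ univ.filter (fun k => k ≤ K) := by
    simp only [mem_filter, mem_univ, true_and, Fin.le_def]
    omega
  rw [sA, hset, sum_insert hnot, sA]
  ring

lemma tes_nonneg {a : Fin n → ℕ} {x : Fin n → Fin n → ℝ} (hx : x ∈ TeslerPolytope n a)
    (i j : Fin n) : 0 ≤ x i j := by
  obtain ⟨hlow, hpos, -⟩ := hx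
  rcases le_or_gt i j with h | h
  · exact hpos i j h
  · rw [hlow i j h]

lemma key {a : Fin n → ℕ} {x : Fin n → Fin n → ℝ} (hx : x ∈ TeslerPolytope n a) (K : Fin n) :
    ∑ k ∈ univ.filter (fun k => k ≤ K), (a k : ℝ)
      = ∑ k ∈ univ.filter (fun k => k ≤ K), x k k
        + ∑ k ∈ univ.filter (fun k => k ≤ K), ∑ j ∈ univ.filter (fun j => K < j), x k j := by
  obtain ⟨hlow, hpos, hhook⟩ := hx
  have h1 : ∑ k ∈ univ.filter (fun k => k ≤ K), (a k : ℝ)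
      = ∑ k ∈ univ.filter (fun k => k ≤ K),
          ((∑ j ∈ univ.filter (fun j => k ≤ j), x k j)
            - ∑ i ∈ univ.filter (fun i => i < k), x i k) := by
    refine sum_congr rfl fun k _ => ?_
    rw [hhook k]
  rw [h1, sum_sub_distrib]
  have hcomm : (∑ k ∈ univ.filter (fun k => k ≤ K), ∑ i ∈ univ.filter (fun i => i < k), x i k)
      = ∑ k : Fin n, ∑ j : Fin n, if j ≤ K then (if k < j then x k j else 0) else 0 :=
    calc (∑ k ∈ univ.filter (fun k => k ≤ K), ∑ i ∈ univ.filter (fun i => i < k), x i k)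
        = ∑ k ∈ univ.filter (fun k => k ≤ K), ∑ i : Fin n, (if i < k then x i k else 0) :=
          sum_congr rfl (fun k _ => sum_filter _ _)
      _ = ∑ i : Fin n, ∑ k ∈ univ.filter (fun k => k ≤ K), (if i < k then x i k else 0) :=
          sum_comm
      _ = ∑ i : Fin n, ∑ k : Fin n, if k ≤ K then (if i < k then x i k else 0) else 0 :=
          sum_congr rfl (fun i _ => sum_filter _ _)
  rw [hcomm]
  have h2 : ∀ k : Fin n,
      (if k ≤ K then ∑ j ∈ univ.filter (fun j => k ≤ j), x k j else 0)
        - (∑ j : Fin n, if j ≤ K then (if k < j then x k j else 0) else 0)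
      = (if k ≤ K then x k k else 0)
        + (if k ≤ K then ∑ j ∈ univ.filter (fun j => K < j), x k j else 0) := by
    intro k
    by_cases hk : k ≤ K
    · simp only [if_pos hk, sum_filter]
      have hk' : (k : ℕ) ≤ (K : ℕ) := hk
      have hcore : ∑ j : Fin n, ((if k ≤ j then x k j else 0)
          - (if j ≤ K then (if k < j then x k j else 0) else 0) - (if K < j then x k j else 0))
          = x k k := by
        simp only [Fin.le_def, Fin.lt_def]
        rw [Finset.sum_eq_single_of_mem k (mem_univ k) (fun j _ hne => ?_)]
        · simp [Nat.not_lt.2 hk']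
        · have hne' : (j : ℕ) ≠ (k : ℕ) := by simpa [Fin.ext_iff] using hne
          split_ifs <;> first | ring1 | (exfalso; omega)
      simp only [sum_sub_distrib] at hcore
      linarith
    · simp only [if_neg hk, zero_sub, zero_add, neg_eq_zero]
      refine sum_eq_zero fun j _ => ?_
      have hk' : ¬ (k : ℕ) ≤ (K : ℕ) := fun h => hk h
      simp only [Fin.le_def, Fin.lt_def]
      split_ifs <;> first | rfl | (exfalso; omega)
  calc (∑ k ∈ univ.filter (fun k => k ≤ K), ∑ j ∈ univ.filter (fun j => k ≤ j), x k j)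
        - ∑ k : Fin n, ∑ j : Fin n, (if j ≤ K then (if k < j then x k j else 0) else 0)
      = ∑ k : Fin n, ((if k ≤ K then ∑ j ∈ univ.filter (fun j => k ≤ j), x k j else 0)
          - ∑ j : Fin n, (if j ≤ K then (if k < j then x k j else 0) else 0)) := by
        rw [sum_sub_distrib, sum_filter]
    _ = ∑ k : Fin n, ((if k ≤ K then x k k else 0)
          + (if k ≤ K then ∑ j ∈ univ.filter (fun j => K < j), x k j else 0)) :=
        sum_congr rfl (fun k _ => h2 k)
    _ = ∑ k ∈ univ.filter (fun k => k ≤ K), x k k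
        + ∑ k ∈ univ.filter (fun k => k ≤ K), ∑ j ∈ univ.filter (fun j => K < j), x k j := by
        rw [sum_add_distrib, sum_filter, sum_filter]

/-- cyclic shift forward on the interval `[i, n-1]` -/
lemma cycle_sum (i : Fin n) (f : Fin n → ℝ) :
    ∑ j ∈ univ.filter (fun j => i ≤ j),
        (if h : (j : ℕ) + 1 < n then f ⟨(j : ℕ) + 1, h⟩ else f i)
      = ∑ j ∈ univ.filter (fun j => i ≤ j), f j := by
  refine Finset.sum_nbij'
    (fun j => if h : (j : ℕ) + 1 < n then (⟨(j : ℕ) + 1, h⟩ : Fin n) else i)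
    (fun j => if (j : ℕ) = (i : ℕ) then (⟨n - 1, Nat.sub_lt i.pos Nat.one_pos⟩ : Fin n)
      else (⟨(j : ℕ) - 1, Nat.lt_of_le_of_lt (Nat.sub_le _ _) j.isLt⟩ : Fin n))
    ?_ ?_ ?_ ?_ ?_ <;>
      (intro j hj; simp only [mem_filter, mem_univ, true_and, Fin.le_def] at hj)
  · by_cases h : (j : ℕ) + 1 < n
    · rw [dif_pos h]
      simp only [mem_filter, mem_univ, true_and, Fin.le_def, Fin.val_mk]
      omega
    · rw [dif_neg h]
      simp
  · by_cases h : (j : ℕ) = (i : ℕ)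
    · rw [if_pos h]
      simp only [mem_filter, mem_univ, true_and, Fin.le_def, Fin.val_mk]
      have := i.isLt; omega
    · rw [if_neg h]
      simp only [mem_filter, mem_univ, true_and, Fin.le_def, Fin.val_mk]
      omega
  · by_cases h : (j : ℕ) + 1 < n
    · rw [dif_pos h]
      have hne : (((⟨(j : ℕ) + 1, h⟩ : Fin n)) : ℕ) ≠ (i : ℕ) := by
        simp only [Fin.val_mk]; omega
      rw [if_neg hne]
      ext
      simp only [Fin.val_mk]
      omega
    · rw [dif_neg h]
      rw [if_pos rfl]
      ext
      simp only [Fin.val_mk]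
      omega
  · by_cases h : (j : ℕ) = (i : ℕ)
    · rw [if_pos h]
      have hcond : ¬ (((⟨n - 1, Nat.sub_lt i.pos Nat.one_pos⟩ : Fin n)) : ℕ) + 1 < n := by
        simp only [Fin.val_mk]; omega
      rw [dif_neg hcond]
      ext
      omega
    · rw [if_neg h]
      have hcond : (((⟨(j : ℕ) - 1, Nat.lt_of_le_of_lt (Nat.sub_le _ _) j.isLt⟩ : Fin n)) : ℕ)
          + 1 < n := by
        simp only [Fin.val_mk]; omega
      rw [dif_pos hcond]
      ext
      simp only [Fin.val_mk]
      omega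
  · by_cases h : (j : ℕ) + 1 < n
    · rw [dif_pos h, dif_pos h]
    · rw [dif_neg h, dif_neg h]

lemma cycle_sum' (i : Fin n) (f : Fin n → ℝ) :
    ∑ j ∈ univ.filter (fun j => i ≤ j),
        (if (j : ℕ) = (i : ℕ) then f ⟨n - 1, Nat.sub_lt i.pos Nat.one_pos⟩
         else f ⟨(j : ℕ) - 1, Nat.lt_of_le_of_lt (Nat.sub_le _ _) j.isLt⟩)
      = ∑ j ∈ univ.filter (fun j => i ≤ j), f j := by
  refine Finset.sum_nbij'
    (fun j => if (j : ℕ) = (i : ℕ) then (⟨n - 1, Nat.sub_lt i.pos Nat.one_pos⟩ : Fin n)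
      else (⟨(j : ℕ) - 1, Nat.lt_of_le_of_lt (Nat.sub_le _ _) j.isLt⟩ : Fin n))
    (fun j => if h : (j : ℕ) + 1 < n then (⟨(j : ℕ) + 1, h⟩ : Fin n) else i)
    ?_ ?_ ?_ ?_ ?_ <;>
      (intro j hj; simp only [mem_filter, mem_univ, true_and, Fin.le_def] at hj)
  · by_cases h : (j : ℕ) = (i : ℕ)
    · rw [if_pos h]
      simp only [mem_filter, mem_univ, true_and, Fin.le_def, Fin.val_mk]
      have := i.isLt; omega
    · rw [if_neg h]
      simp only [mem_filter, mem_univ, true_and, Fin.le_def, Fin.val_mk]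
      omega
  · by_cases h : (j : ℕ) + 1 < n
    · rw [dif_pos h]
      simp only [mem_filter, mem_univ, true_and, Fin.le_def, Fin.val_mk]
      omega
    · rw [dif_neg h]
      simp
  · by_cases h : (j : ℕ) = (i : ℕ)
    · rw [if_pos h]
      have hcond : ¬ (((⟨n - 1, Nat.sub_lt i.pos Nat.one_pos⟩ : Fin n)) : ℕ) + 1 < n := by
        simp only [Fin.val_mk]; omega
      rw [dif_neg hcond]
      ext
      omega
    · rw [if_neg h]
      have hcond : (((⟨(j : ℕ) - 1, Nat.lt_of_le_of_lt (Nat.sub_le _ _) j.isLt⟩ : Fin n)) : ℕ)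
          + 1 < n := by
        simp only [Fin.val_mk]; omega
      rw [dif_pos hcond]
      ext
      simp only [Fin.val_mk]
      omega
  · by_cases h : (j : ℕ) + 1 < n
    · rw [dif_pos h]
      have hne : (((⟨(j : ℕ) + 1, h⟩ : Fin n)) : ℕ) ≠ (i : ℕ) := by
        simp only [Fin.val_mk]; omega
      rw [if_neg hne]
      ext
      simp only [Fin.val_mk]
      omega
    · rw [dif_neg h]
      rw [if_pos rfl]
      ext
      simp only [Fin.val_mk]
      omega
  · by_cases h : (j : ℕ) = (i : ℕ)
    · rw [if_pos h, if_pos h]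
    · rw [if_neg h, if_neg h]

noncomputable def phiFun (a : Fin n → ℕ) (x : Fin n → Fin n → ℝ) : Fin n → Fin n → ℝ :=
  fun i j =>
    if h : (j : ℕ) + 1 < n then
      if (i : ℕ) ≤ (j : ℕ) then x i ⟨(j : ℕ) + 1, h⟩
      else if (i : ℕ) = (j : ℕ) + 1 then
        sA a i - ∑ j' ∈ univ.filter (fun j' => i ≤ j'), x i j'
      else 0
    else x i i

lemma sA_zero_fun (i : Fin n) : sA (fun _ => 0) i = 0 := by simp [sA]

noncomputable def phiAff (a : Fin n → ℕ) :
    (Fin n → Fin n → ℝ) →ᵃ[ℝ] (Fin n → Fin n → ℝ) where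
  toFun := phiFun a
  linear :=
    { toFun := phiFun (fun _ => 0)
      map_add' := by
        intro x y
        funext i j
        simp only [phiFun, Pi.add_apply, sA_zero_fun, sum_add_distrib]
        split_ifs <;> ring
      map_smul' := by
        intro c x
        funext i j
        simp only [phiFun, Pi.smul_apply, smul_eq_mul, RingHom.id_apply, sA_zero_fun]
        split_ifs <;> simp [Finset.mul_sum] }
  map_vadd' := by
    intro p v
    funext i j
    simp only [phiFun, vadd_eq_add, Pi.add_apply, LinearMap.coe_mk, AddHom.coe_mk,
      sA_zero_fun, sum_add_distrib]
    split_ifs <;> ring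

lemma phiAff_coe (a : Fin n → ℕ) : ⇑(phiAff a) = phiFun a := rfl

lemma tes_rowsum_le {a : Fin n → ℕ} {x : Fin n → Fin n → ℝ} (hx : x ∈ TeslerPolytope n a)
    (i : Fin n) (hi : 0 < (i : ℕ)) :
    ∑ j ∈ univ.filter (fun j => i ≤ j), x i j ≤ sA a i := by
  have hK : (i : ℕ) - 1 < n := Nat.lt_of_le_of_lt (Nat.sub_le _ _) i.isLt
  set K : Fin n := ⟨(i : ℕ) - 1, hK⟩ with hKdef
  have hkey := key hx K
  have hdiag : 0 ≤ ∑ k ∈ univ.filter (fun k => k ≤ K), x k k :=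
    sum_nonneg fun k _ => tes_nonneg hx k k
  have hfe : univ.filter (fun k => k < i) = univ.filter (fun k => k ≤ K) := by
    ext k
    simp only [mem_filter, mem_univ, true_and, Fin.le_def, Fin.lt_def, hKdef, Fin.val_mk]
    omega
  have h1 : ∑ k ∈ univ.filter (fun k => k < i), x k i
      ≤ ∑ k ∈ univ.filter (fun k => k ≤ K), ∑ j ∈ univ.filter (fun j => K < j), x k j := by
    rw [hfe]
    refine sum_le_sum fun k _ => ?_
    refine Finset.single_le_sum (fun j _ => tes_nonneg hx k j) ?_
    simp only [mem_filter, mem_univ, true_and, Fin.lt_def, hKdef, Fin.val_mk]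
    omega
  have hhook := hx.2.2 i
  have hsucc : sA a i = sA a K + (a i : ℝ) := sA_succ a K i (by simp [hKdef]; omega)
  have hsAK : sA a K = ∑ k ∈ univ.filter (fun k => k ≤ K), (a k : ℝ) := rfl
  linarith

lemma tes_diagsum {a : Fin n → ℕ} {x : Fin n → Fin n → ℝ} (hx : x ∈ TeslerPolytope n a)
    (hn : 0 < n) :
    ∑ k : Fin n, x k k = sA a ⟨n - 1, Nat.sub_lt hn Nat.one_pos⟩ := by
  have hkey := key hx ⟨n - 1, Nat.sub_lt hn Nat.one_pos⟩
  have h1 : univ.filter (fun k => k ≤ (⟨n - 1, Nat.sub_lt hn Nat.one_pos⟩ : Fin n)) = univ := by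
    ext k
    simp only [mem_filter, mem_univ, true_and, Fin.le_def, Fin.val_mk, iff_true]
    have := k.isLt; omega
  have h2 : univ.filter (fun j => (⟨n - 1, Nat.sub_lt hn Nat.one_pos⟩ : Fin n) < j) = ∅ := by
    ext k
    simp only [mem_filter, mem_univ, true_and, Fin.lt_def, Fin.val_mk, notMem_empty, iff_false]
    have := k.isLt; omega
  rw [h1, h2] at hkey
  simp only [sum_empty, sum_const_zero, add_zero] at hkey
  rw [sA, h1]
  rw [← hkey]

lemma phi_nonneg {a : Fin n → ℕ} {x : Fin n → Fin n → ℝ} (hx : x ∈ TeslerPolytope n a)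
    (i j : Fin n) : 0 ≤ phiFun a x i j := by
  simp only [phiFun]
  by_cases h : (j : ℕ) + 1 < n
  · rw [dif_pos h]
    by_cases h2 : (i : ℕ) ≤ (j : ℕ)
    · rw [if_pos h2]
      exact tes_nonneg hx i _
    · rw [if_neg h2]
      by_cases h3 : (i : ℕ) = (j : ℕ) + 1
      · rw [if_pos h3]
        have := tes_rowsum_le hx i (by omega)
        linarith
      · rw [if_neg h3]
  · rw [dif_neg h]
    exact tes_nonneg hx i i

lemma phi_zeros {a : Fin n → ℕ} (x : Fin n → Fin n → ℝ) (i j : Fin n)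
    (hij : (j : ℕ) + 2 ≤ (i : ℕ)) : phiFun a x i j = 0 := by
  have hilt := i.isLt
  simp only [phiFun]
  rw [dif_pos (by omega : (j : ℕ) + 1 < n), if_neg (by omega), if_neg (by omega)]

lemma phi_rowsum {a : Fin n → ℕ} {x : Fin n → Fin n → ℝ} (hx : x ∈ TeslerPolytope n a)
    (i : Fin n) : ∑ j : Fin n, phiFun a x i j = sA a i := by
  rw [← sum_filter_add_sum_filter_not univ (fun j => i ≤ j) (phiFun a x i)]
  have h1 : ∑ j ∈ univ.filter (fun j => i ≤ j), phiFun a x i j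
      = ∑ j ∈ univ.filter (fun j => i ≤ j), x i j := by
    rw [← cycle_sum i (x i)]
    refine sum_congr rfl fun j hj => ?_
    simp only [mem_filter, mem_univ, true_and] at hj
    simp only [phiFun]
    by_cases h : (j : ℕ) + 1 < n
    · rw [dif_pos h, dif_pos h, if_pos (Fin.le_def.mp hj)]
    · rw [dif_neg h, dif_neg h]
  rw [h1]
  by_cases hi : (i : ℕ) = 0
  · have h2 : univ.filter (fun j => ¬ i ≤ j) = ∅ := by
      ext j
      simp only [mem_filter, mem_univ, true_and, notMem_empty, iff_false, not_not, Fin.le_def]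
      omega
    have h3 : univ.filter (fun k => k < i) = (∅ : Finset (Fin n)) := by
      ext k
      simp only [mem_filter, mem_univ, true_and, notMem_empty, iff_false, Fin.lt_def]
      omega
    have hhook := hx.2.2 i
    rw [h3] at hhook
    simp only [sum_empty, sub_zero] at hhook
    rw [h2, sum_empty, add_zero, hhook, sA_zero a i hi]
  · have hilt := i.isLt
    have hK : (i : ℕ) - 1 < n := by omega
    have h2 : ∑ j ∈ univ.filter (fun j => ¬ i ≤ j), phiFun a x i j
        = sA a i - ∑ j' ∈ univ.filter (fun j' => i ≤ j'), x i j' := by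
      rw [Finset.sum_eq_single_of_mem (⟨(i : ℕ) - 1, hK⟩ : Fin n) ?_ ?_]
      · simp only [phiFun]
        rw [dif_pos (by first | omega | (simp only [Fin.val_mk]; omega)), if_neg (by first | omega | (simp only [Fin.val_mk]; omega)),
          if_pos (by first | omega | (simp only [Fin.val_mk]; omega))]
      · simp only [mem_filter, mem_univ, true_and, Fin.le_def, Fin.val_mk]
        omega
      · intro b hb hbne
        simp only [mem_filter, mem_univ, true_and, Fin.le_def] at hb
        have hbne' : (b : ℕ) ≠ (i : ℕ) - 1 := by
          simpa [Fin.ext_iff] using hbne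
        have hblt := b.isLt
        simp only [phiFun]
        rw [dif_pos (by omega), if_neg (by omega), if_neg (by omega)]
    rw [h2]
    ring

lemma phi_colsum {a : Fin n → ℕ} {x : Fin n → Fin n → ℝ} (hx : x ∈ TeslerPolytope n a)
    (j : Fin n) : ∑ i : Fin n, phiFun a x i j = sA a j := by
  by_cases h : (j : ℕ) + 1 < n
  · set j1 : Fin n := ⟨(j : ℕ) + 1, h⟩ with hj1def
    rw [← sum_filter_add_sum_filter_not univ (fun i => i ≤ j) (fun i => phiFun a x i j)]
    have h1 : ∑ i ∈ univ.filter (fun i => i ≤ j), phiFun a x i j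
        = ∑ k ∈ univ.filter (fun k => k < j1), x k j1 := by
      have hfe : univ.filter (fun i => i ≤ j) = univ.filter (fun k => k < j1) := by
        ext k
        simp only [mem_filter, mem_univ, true_and, Fin.le_def, Fin.lt_def, hj1def, Fin.val_mk]
        omega
      rw [hfe]
      refine sum_congr rfl fun i hi => ?_
      simp only [mem_filter, mem_univ, true_and, Fin.lt_def, hj1def, Fin.val_mk] at hi
      simp only [phiFun]
      rw [dif_pos h, if_pos (by omega)]
    have h2 : ∑ i ∈ univ.filter (fun i => ¬ i ≤ j), phiFun a x i j
        = sA a j1 - ∑ j' ∈ univ.filter (fun j' => j1 ≤ j'), x j1 j' := by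
      rw [Finset.sum_eq_single_of_mem j1 ?_ ?_]
      · simp only [phiFun]
        rw [dif_pos h, if_neg (by first | omega | (simp only [hj1def, Fin.val_mk]; omega)),
          if_pos (by first | rfl | (simp only [hj1def, Fin.val_mk]))]
      · simp only [mem_filter, mem_univ, true_and, Fin.le_def, hj1def, Fin.val_mk]
        omega
      · intro b hb hbne
        simp only [mem_filter, mem_univ, true_and, Fin.le_def] at hb
        have hbne' : (b : ℕ) ≠ (j : ℕ) + 1 := by
          simpa [Fin.ext_iff, hj1def] using hbne
        simp only [phiFun]
        rw [dif_pos h, if_neg (by omega), if_neg (by omega)]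
    have hhook := hx.2.2 j1
    have hsucc : sA a j1 = sA a j + (a j1 : ℝ) := sA_succ a j j1 (by simp [hj1def])
    rw [h1, h2]
    linarith
  · have hd : ∀ i : Fin n, phiFun a x i j = x i i := by
      intro i
      simp only [phiFun]
      rw [dif_neg h]
    rw [sum_congr rfl fun i _ => hd i]
    have hn : 0 < n := j.pos
    rw [tes_diagsum hx hn]
    congr 1
    ext
    simp only [Fin.val_mk]
    have := j.isLt
    omega

lemma phi_injOn (a : Fin n → ℕ) : Set.InjOn (phiFun a) (TeslerPolytope n a) := by
  intro x hx y hy h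
  funext i j
  by_cases hji : (j : ℕ) < (i : ℕ)
  · rw [hx.1 i j (Fin.lt_def.mpr hji), hy.1 i j (Fin.lt_def.mpr hji)]
  · by_cases hij : (i : ℕ) = (j : ℕ)
    · have h0 : 0 < n := i.pos
      have hcf := congrFun (congrFun h i) ⟨n - 1, Nat.sub_lt h0 Nat.one_pos⟩
      simp only [phiFun] at hcf
      rw [dif_neg (by first | omega | (simp only [Fin.val_mk]; omega)),
        dif_neg (by first | omega | (simp only [Fin.val_mk]; omega))] at hcf
      have hj : j = i := by ext; omega
      rw [hj]
      exact hcf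
    · have hlt : (i : ℕ) < (j : ℕ) := by omega
      have hj1 : (j : ℕ) - 1 < n := Nat.lt_of_le_of_lt (Nat.sub_le _ _) j.isLt
      have hcf := congrFun (congrFun h i) ⟨(j : ℕ) - 1, hj1⟩
      simp only [phiFun] at hcf
      have hc : ((⟨(j : ℕ) - 1, hj1⟩ : Fin n) : ℕ) + 1 < n := by
        simp only [Fin.val_mk]; have := j.isLt; omega
      rw [dif_pos hc, dif_pos hc, if_pos (by first | omega | (simp only [Fin.val_mk]; omega)),
        if_pos (by first | omega | (simp only [Fin.val_mk]; omega))] at hcf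
      have hjj : (⟨((⟨(j : ℕ) - 1, hj1⟩ : Fin n) : ℕ) + 1, hc⟩ : Fin n) = j := by
        ext; simp only [Fin.val_mk]; omega
      rw [hjj] at hcf
      exact hcf

noncomputable def psiFun (hn : 0 < n) (m : Fin n → Fin n → ℝ) : Fin n → Fin n → ℝ :=
  fun i j =>
    if (i : ℕ) ≤ (j : ℕ) then
      (if (j : ℕ) = (i : ℕ) then m i ⟨n - 1, Nat.sub_lt hn Nat.one_pos⟩
       else m i ⟨(j : ℕ) - 1, Nat.lt_of_le_of_lt (Nat.sub_le _ _) j.isLt⟩)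
    else 0

lemma psi_upper_sum (hn : 0 < n) (m : Fin n → Fin n → ℝ) (i : Fin n) :
    ∑ j ∈ univ.filter (fun j => i ≤ j), psiFun hn m i j
      = ∑ j ∈ univ.filter (fun j => i ≤ j), m i j := by
  rw [← cycle_sum' i (m i)]
  refine sum_congr rfl fun j hj => ?_
  simp only [mem_filter, mem_univ, true_and, Fin.le_def] at hj
  simp only [psiFun]
  rw [if_pos hj]

/-- row split for a member of the face -/
lemma F_rowsplit {a : Fin n → ℕ} {m : Fin n → Fin n → ℝ}
    (hrow : ∀ i : Fin n, ∑ j : Fin n, m i j = sA a i)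
    (hzero : ∀ i j : Fin n, (j : ℕ) + 2 ≤ (i : ℕ) → m i j = 0)
    (i : Fin n) (hi : 0 < (i : ℕ)) :
    ∑ j ∈ univ.filter (fun j => i ≤ j), m i j
      = sA a i - m i ⟨(i : ℕ) - 1, Nat.lt_of_le_of_lt (Nat.sub_le _ _) i.isLt⟩ := by
  have hr := hrow i
  rw [← sum_filter_add_sum_filter_not univ (fun j => i ≤ j) (m i)] at hr
  have h2 : ∑ j ∈ univ.filter (fun j => ¬ i ≤ j), m i j
      = m i ⟨(i : ℕ) - 1, Nat.lt_of_le_of_lt (Nat.sub_le _ _) i.isLt⟩ := by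
    rw [Finset.sum_eq_single_of_mem (⟨(i : ℕ) - 1, _⟩ : Fin n) ?_ ?_]
    · simp only [mem_filter, mem_univ, true_and, Fin.le_def, Fin.val_mk]
      omega
    · intro b hb hbne
      simp only [mem_filter, mem_univ, true_and, Fin.le_def] at hb
      have hbne' : (b : ℕ) ≠ (i : ℕ) - 1 := by simpa [Fin.ext_iff] using hbne
      exact hzero i b (by omega)
  rw [h2] at hr
  linarith

lemma F_colsplit {a : Fin n → ℕ} {m : Fin n → Fin n → ℝ}
    (hcol : ∀ i : Fin n, ∑ k : Fin n, m k i = sA a i)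
    (hzero : ∀ i j : Fin n, (j : ℕ) + 2 ≤ (i : ℕ) → m i j = 0)
    (i : Fin n) (hi : 0 < (i : ℕ)) :
    ∑ k ∈ univ.filter (fun k => k < i),
        m k ⟨(i : ℕ) - 1, Nat.lt_of_le_of_lt (Nat.sub_le _ _) i.isLt⟩
      = sA a ⟨(i : ℕ) - 1, Nat.lt_of_le_of_lt (Nat.sub_le _ _) i.isLt⟩
        - m i ⟨(i : ℕ) - 1, Nat.lt_of_le_of_lt (Nat.sub_le _ _) i.isLt⟩ := by
  set i' : Fin n := ⟨(i : ℕ) - 1, Nat.lt_of_le_of_lt (Nat.sub_le _ _) i.isLt⟩ with hi'def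
  have hc := hcol i'
  rw [← sum_filter_add_sum_filter_not univ (fun k => k < i) (fun k => m k i')] at hc
  have h2 : ∑ k ∈ univ.filter (fun k => ¬ k < i), m k i' = m i i' := by
    rw [Finset.sum_eq_single_of_mem i ?_ ?_]
    · simp only [mem_filter, mem_univ, true_and, Fin.lt_def]
      omega
    · intro b hb hbne
      simp only [mem_filter, mem_univ, true_and, Fin.lt_def, not_lt] at hb
      have hbne' : (b : ℕ) ≠ (i : ℕ) := by simpa [Fin.ext_iff] using hbne
      refine hzero b i' ?_
      simp only [hi'def, Fin.val_mk]
      omega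
  rw [h2] at hc
  linarith


noncomputable def lvec : (Fin n → Fin n → ℝ) →ₗ[ℝ] ℝ where
  toFun M := ∑ i : Fin n, ∑ j ∈ univ.filter (fun j : Fin n => (j : ℕ) + 2 ≤ (i : ℕ)), (- M i j)
  map_add' x y := by
    simp only [Pi.add_apply, neg_add, sum_add_distrib]
  map_smul' c x := by
    simp only [Pi.smul_apply, smul_eq_mul, RingHom.id_apply, mul_neg, Finset.mul_sum]

lemma lvec_apply (M : Fin n → Fin n → ℝ) :
    lvec M = ∑ i : Fin n, ∑ j ∈ univ.filter (fun j : Fin n => (j : ℕ) + 2 ≤ (i : ℕ)),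
      (- M i j) := rfl

lemma lvec_nonpos {M : Fin n → Fin n → ℝ} (hpos : ∀ i j : Fin n, 0 ≤ M i j) : lvec M ≤ 0 := by
  rw [lvec_apply]
  exact sum_nonpos fun i _ => sum_nonpos fun j _ => neg_nonpos.mpr (hpos i j)

lemma lvec_zero {M : Fin n → Fin n → ℝ}
    (hz : ∀ i j : Fin n, (j : ℕ) + 2 ≤ (i : ℕ) → M i j = 0) : lvec M = 0 := by
  rw [lvec_apply]
  refine sum_eq_zero fun i _ => sum_eq_zero fun j hj => ?_
  simp only [mem_filter, mem_univ, true_and] at hj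
  rw [hz i j hj, neg_zero]

lemma lvec_eq_zero_imp {M : Fin n → Fin n → ℝ} (hpos : ∀ i j : Fin n, 0 ≤ M i j)
    (h : lvec M = 0) : ∀ i j : Fin n, (j : ℕ) + 2 ≤ (i : ℕ) → M i j = 0 := by
  have h' : ∑ i : Fin n, ∑ j ∈ univ.filter (fun j : Fin n => (j : ℕ) + 2 ≤ (i : ℕ)),
      M i j = 0 := by
    rw [lvec_apply] at h
    simp only [sum_neg_distrib, neg_eq_zero] at h
    exact h
  intro i j hij
  have houter := (Finset.sum_eq_zero_iff_of_nonneg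
    (fun i (_ : i ∈ univ) => sum_nonneg fun j _ => hpos i j)).mp h' i (mem_univ i)
  exact (Finset.sum_eq_zero_iff_of_nonneg (fun j _ => hpos i j)).mp houter j
    (by simp only [mem_filter, mem_univ, true_and]; exact hij)


end TeslerFaceAux

open TeslerFaceAux in
/-- Let `a = (a_1, …, a_n)` be nonnegative integers with `a_1 > 0` and let
`s = (a_1, a_1 + a_2, …, ∑ a_i)` be the vector of partial sums.  Then the set
`F_n = {M ∈ Trans_n(s) : m_{i,j} = 0 for i - j ≥ 2}` is a (nonempty, exposed) face of
`Trans_n(s)`, and there is an affine bijection from `Tes_n(a)` onto `F_n`. -/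
theorem teslerPolytope_iso_face_transPolytope (n : ℕ) (hn : 0 < n) (a : Fin n → ℕ)
    (ha : 0 < a ⟨0, hn⟩) :
    (({M ∈ TransPolytope n (fun k => ∑ i ∈ univ.filter (fun i => i ≤ k), a i) |
        ∀ i j : Fin n, (j : ℕ) + 2 ≤ (i : ℕ) → M i j = 0} : Set (Fin n → Fin n → ℝ)).Nonempty
      ∧ IsExposed ℝ (TransPolytope n (fun k => ∑ i ∈ univ.filter (fun i => i ≤ k), a i))
          {M ∈ TransPolytope n (fun k => ∑ i ∈ univ.filter (fun i => i ≤ k), a i) |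
            ∀ i j : Fin n, (j : ℕ) + 2 ≤ (i : ℕ) → M i j = 0})
    ∧ ∃ Φ : (Fin n → Fin n → ℝ) →ᵃ[ℝ] (Fin n → Fin n → ℝ),
        Set.BijOn Φ (TeslerPolytope n a)
          {M ∈ TransPolytope n (fun k => ∑ i ∈ univ.filter (fun i => i ≤ k), a i) |
            ∀ i j : Fin n, (j : ℕ) + 2 ≤ (i : ℕ) → M i j = 0} := by
  classical
  -- the diagonal matrix diag(s) is in the face
  set sfun : Fin n → ℕ := fun k => ∑ i ∈ univ.filter (fun i => i ≤ k), a i with hsfun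
  have hdiag : (fun i j : Fin n => if i = j then ((sfun i : ℕ) : ℝ) else 0)
      ∈ {M ∈ TransPolytope n sfun | ∀ i j : Fin n, (j : ℕ) + 2 ≤ (i : ℕ) → M i j = 0} := by
    refine ⟨⟨?_, ?_, ?_⟩, ?_⟩
    · intro i j
      dsimp only
      split_ifs
      · exact Nat.cast_nonneg _
      · exact le_refl _
    · intro i
      simp
    · intro i
      simp
    · intro i j hij
      have hne : i ≠ j := by
        intro hc; rw [hc] at hij; omega
      dsimp only
      rw [if_neg hne]
  refine ⟨⟨⟨_, hdiag⟩, ?_⟩, ⟨phiAff a, ?_, ?_, ?_⟩⟩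
  · -- exposed
    intro _
    refine ⟨LinearMap.toContinuousLinearMap lvec, ?_⟩
    ext M
    simp only [Set.mem_setOf_eq, LinearMap.coe_toContinuousLinearMap']
    constructor
    · rintro ⟨hMT, hMz⟩
      refine ⟨hMT, fun y hy => ?_⟩
      rw [lvec_zero hMz]
      exact lvec_nonpos hy.1
    · rintro ⟨hMT, hmax⟩
      refine ⟨hMT, ?_⟩
      have h1 := lvec_nonpos hMT.1
      have h2 := hmax _ hdiag.1
      rw [lvec_zero hdiag.2] at h2
      exact lvec_eq_zero_imp hMT.1 (le_antisymm h1 h2)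
  · -- MapsTo
    intro x hx
    rw [Set.mem_setOf_eq, phiAff_coe]
    exact ⟨⟨fun i j => phi_nonneg hx i j,
      fun i => (phi_rowsum hx i).trans (sA_eq a i).symm,
      fun i => (phi_colsum hx i).trans (sA_eq a i).symm⟩,
      fun i j hij => phi_zeros x i j hij⟩
  · -- InjOn
    rw [phiAff_coe]
    exact phi_injOn a
  · -- SurjOn
    intro m hm
    obtain ⟨⟨hpos, hrow, hcol⟩, hzero⟩ := hm
    have hrow' : ∀ i : Fin n, ∑ j : Fin n, m i j = sA a i :=
      fun i => (hrow i).trans (sA_eq a i)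
    have hcol' : ∀ i : Fin n, ∑ k : Fin n, m k i = sA a i :=
      fun i => (hcol i).trans (sA_eq a i)
    refine ⟨psiFun hn m, ⟨?_, ?_, ?_⟩, ?_⟩
    · -- lower zero
      intro i j hji
      have hji' := Fin.lt_def.mp hji
      simp only [psiFun]
      rw [if_neg (by omega)]
    · -- nonneg
      intro i j hij
      simp only [psiFun]
      split_ifs
      · exact hpos i _
      · exact hpos i _
      · exact le_refl 0
    · -- hook sums
      intro k
      rw [psi_upper_sum hn m k]
      by_cases hk : (k : ℕ) = 0
      · have hf : univ.filter (fun l => l < k) = (∅ : Finset (Fin n)) := by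
          ext l
          simp only [mem_filter, mem_univ, true_and, notMem_empty, iff_false, Fin.lt_def]
          omega
        have hfull : univ.filter (fun j => k ≤ j) = univ := by
          ext l
          simp only [mem_filter, mem_univ, true_and, Fin.le_def, iff_true]
          omega
        rw [hf, sum_empty, sub_zero, hfull, hrow' k, sA_zero a k hk]
      · have hk' : 0 < (k : ℕ) := by omega
        have hsub : ∑ l ∈ univ.filter (fun l => l < k), psiFun hn m l k
            = ∑ l ∈ univ.filter (fun l => l < k),
                m l ⟨(k : ℕ) - 1, Nat.lt_of_le_of_lt (Nat.sub_le _ _) k.isLt⟩ := by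
          refine sum_congr rfl fun l hl => ?_
          simp only [mem_filter, mem_univ, true_and, Fin.lt_def] at hl
          simp only [psiFun]
          rw [if_pos (by omega), if_neg (by omega)]
        rw [hsub, F_rowsplit hrow' hzero k hk', F_colsplit hcol' hzero k hk',
          sA_succ a ⟨(k : ℕ) - 1, Nat.lt_of_le_of_lt (Nat.sub_le _ _) k.isLt⟩ k
            (by first | omega | (simp only [Fin.val_mk]; omega))]
        ring
    · -- phi (psi m) = m
      rw [phiAff_coe]
      funext i j
      simp only [phiFun]
      by_cases h : (j : ℕ) + 1 < n
      · rw [dif_pos h]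
        by_cases h2 : (i : ℕ) ≤ (j : ℕ)
        · rw [if_pos h2]
          simp only [psiFun]
          rw [if_pos (by first | omega | (simp only [Fin.val_mk]; omega)),
            if_neg (by first | omega | (simp only [Fin.val_mk]; omega))]
          congr 1
          all_goals (ext; first | omega | (simp only [Fin.val_mk]; omega))
        · rw [if_neg h2]
          by_cases h3 : (i : ℕ) = (j : ℕ) + 1
          · rw [if_pos h3]
            rw [psi_upper_sum hn m i, F_rowsplit hrow' hzero i (by omega)]
            have hij : (⟨(i : ℕ) - 1, Nat.lt_of_le_of_lt (Nat.sub_le _ _) i.isLt⟩ : Fin n)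
                = j := by
              ext; first | omega | (simp only [Fin.val_mk]; omega)
            rw [hij]
            ring
          · rw [if_neg h3]
            exact (hzero i j (by omega)).symm
      · rw [dif_neg h]
        simp only [psiFun]
        rw [if_pos trivial, if_pos (le_refl ((i : ℕ)))]
        have := j.isLt
        congr 1
        all_goals (ext; first | omega | (simp only [Fin.val_mk]; omega))
end

section
/- Let a = (a_1,…,a_n) be a vector of nonnegative integers and let T_1 and T_2 be two a-Tesler tableaux with dim(T_1) = dim(T_2) = 0. If T_1 ≤ T_2 componentwise, then T_1 = T_2. -/
open Finset

/-- An `a`-Tesler tableau: a `{0,1}`-filling `T` of the reverse staircase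
`{(i,j) : 1 ≤ i ≤ j ≤ n}` (recorded as a function on all pairs, vanishing below the
diagonal) such that:
(1) if `a i > 0` then row `i` contains a `1`;
(2) if `i < j` and `T i j = 1` then row `j` contains a `1`;
(3) if `a j = 0` and `T i j = 0` for all `i < j`, then row `j` is zero. -/
def IsTeslerTableau (n : ℕ) (a : Fin n → ℕ) (T : Fin n → Fin n → ℕ) : Prop :=
  (∀ i j : Fin n, ¬ i ≤ j → T i j = 0) ∧
  (∀ i j : Fin n, T i j ≤ 1) ∧
  (∀ i : Fin n, 0 < a i → ∃ j : Fin n, i ≤ j ∧ T i j = 1) ∧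
  (∀ i j : Fin n, i < j → T i j = 1 → ∃ k : Fin n, j ≤ k ∧ T j k = 1) ∧
  (∀ j : Fin n, a j = 0 → (∀ i : Fin n, i < j → T i j = 0) →
    ∀ k : Fin n, j ≤ k → T j k = 0)

/-- The dimension of a Tesler tableau: `∑ i (r_i - 1)` where `r_i` is the number of
`1`'s in row `i` if row `i` is nonzero, and `r_i = 1` if row `i` is zero.  (With
truncated `ℕ`-subtraction, both cases are `(number of 1's in row i) - 1`.) -/
def tabDim (n : ℕ) (T : Fin n → Fin n → ℕ) : ℕ :=
  ∑ i : Fin n, ((univ.filter (fun j => T i j = 1)).card - 1)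

/-- Two zero-dimensional `a`-Tesler tableaux that are componentwise comparable are
equal. -/
theorem zero_dimensional_tesler_tableaux_distinct (n : ℕ) (a : Fin n → ℕ)
    (T₁ T₂ : Fin n → Fin n → ℕ)
    (h₁ : IsTeslerTableau n a T₁) (h₂ : IsTeslerTableau n a T₂)
    (hd₁ : tabDim n T₁ = 0) (hd₂ : tabDim n T₂ = 0)
    (hle : ∀ i j : Fin n, T₁ i j ≤ T₂ i j) :
    T₁ = T₂ := by
  classical
  obtain ⟨hz₁, hb₁, ha₁, hr₁, hc₁⟩ := h₁
  obtain ⟨hz₂, hb₂, ha₂, hr₂, hc₂⟩ := h₂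
  have card1 : ∀ (T : Fin n → Fin n → ℕ), tabDim n T = 0 → ∀ i : Fin n,
      (univ.filter (fun j => T i j = 1)).card ≤ 1 := by
    intro T hd i
    have := (Finset.sum_eq_zero_iff.mp hd) i (mem_univ i)
    omega
  by_contra hne
  have hSne : (univ.filter (fun i : Fin n => ∃ j, T₁ i j ≠ T₂ i j)).Nonempty := by
    by_contra h
    apply hne
    funext i j
    by_contra hij
    exact h ⟨i, by simp; exact ⟨j, hij⟩⟩
  set S := univ.filter (fun i : Fin n => ∃ j, T₁ i j ≠ T₂ i j) with hSdef
  set i := S.min' hSne with hi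
  obtain ⟨j, hij⟩ : ∃ j, T₁ i j ≠ T₂ i j := by
    exact (mem_filter.mp (S.min'_mem hSne)).2
  have hT₁ij : T₁ i j = 0 ∧ T₂ i j = 1 := by
    have := hle i j
    have := hb₂ i j
    omega
  -- row i of T₁ is zero
  have hrow0 : ∀ k : Fin n, T₁ i k = 0 := by
    intro k
    by_contra hk
    have hk1 : T₁ i k = 1 := by have := hb₁ i k; omega
    have hk2 : T₂ i k = 1 := by have := hle i k; have := hb₂ i k; omega
    have hjk : j ≠ k := by
      intro h; rw [h] at hT₁ij; omega
    have hc := card1 T₂ hd₂ i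
    have hjm : j ∈ univ.filter (fun m => T₂ i m = 1) := by simp [hT₁ij.2]
    have hkm : k ∈ univ.filter (fun m => T₂ i m = 1) := by simp [hk2]
    exact hjk (Finset.card_le_one.mp hc j hjm k hkm)
  -- a i = 0
  have hai : a i = 0 := by
    by_contra h
    obtain ⟨j', _, hj'⟩ := ha₁ i (Nat.pos_of_ne_zero h)
    rw [hrow0 j'] at hj'; omega
  -- below the min, tableaux agree
  have hagree : ∀ k : Fin n, k < i → ∀ m : Fin n, T₁ k m = T₂ k m := by
    intro k hk m
    by_contra h
    have : k ∈ S := by rw [hSdef, mem_filter]; exact ⟨mem_univ k, m, h⟩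
    exact absurd (S.min'_le k this) (not_le.mpr hk)
  -- there is k < i with T₂ k i = 1
  have hij' : i ≤ j := by
    by_contra h
    rw [hz₂ i j h] at hT₁ij; omega
  have hex : ∃ k : Fin n, k < i ∧ T₂ k i = 1 := by
    by_contra h
    push_neg at h
    have : ∀ k : Fin n, k < i → T₂ k i = 0 := by
      intro k hk
      have := hb₂ k i
      have := h k hk
      omega
    have := hc₂ i hai this j hij'
    omega
  obtain ⟨k, hki, hk1⟩ := hex
  have hT₁ki : T₁ k i = 1 := by rw [hagree k hki i]; exact hk1
  obtain ⟨m, _, hm⟩ := hr₁ k i hki hT₁ki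
  rw [hrow0 m] at hm
  omega
end

section
/- Let a = (a_1,…,a_n) be a vector of nonnegative integers and let T_1 and T_2 be two a-Tesler tableaux. Then the componentwise maximum T defined by T(i,j) = max(T_1(i,j), T_2(i,j)) is also an a-Tesler tableau. -/
open Finset

/-- The componentwise maximum of two `a`-Tesler tableaux is an `a`-Tesler tableau. -/
theorem max_isTeslerTableau (n : ℕ) (a : Fin n → ℕ) (T₁ T₂ : Fin n → Fin n → ℕ)
    (h₁ : IsTeslerTableau n a T₁) (h₂ : IsTeslerTableau n a T₂) :
    IsTeslerTableau n a (fun i j => max (T₁ i j) (T₂ i j)) := by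
  obtain ⟨z1, b1, r1, c1, z1'⟩ := h₁
  obtain ⟨z2, b2, r2, c2, z2'⟩ := h₂
  refine ⟨?_, ?_, ?_, ?_, ?_⟩
  · intro i j h
    have := z1 i j h; have := z2 i j h
    simp only; omega
  · intro i j
    have := b1 i j; have := b2 i j
    simp only; omega
  · intro i hi
    obtain ⟨j, hij, hj⟩ := r1 i hi
    have := b2 i j
    exact ⟨j, hij, by simp only; omega⟩
  · intro i j hij h
    simp only at h
    by_cases hc : T₁ i j = 1
    · obtain ⟨k, hk, hk1⟩ := c1 i j hij hc
      have := b2 j k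
      exact ⟨k, hk, by simp only; omega⟩
    · have h2' : T₂ i j = 1 := by have := b1 i j; have := b2 i j; omega
      obtain ⟨k, hk, hk1⟩ := c2 i j hij h2'
      have := b1 j k
      exact ⟨k, hk, by simp only; omega⟩
  · intro j hj hz k hk
    have h1 : ∀ i : Fin n, i < j → T₁ i j = 0 := fun i hi => by
      have := hz i hi; simp only at this; omega
    have h2 : ∀ i : Fin n, i < j → T₂ i j = 0 := fun i hi => by
      have := hz i hi; simp only at this; omega
    have := z1' j hj h1 k hk
    have := z2' j hj h2 k hk
    simp only; omega
end

section
/- Let a = (a_1,…,a_n) be a vector of nonnegative integers and let F be a face of the Tesler polytope Tes_n(a). Define T : {(i,j) : 1 ≤ i ≤ j ≤ n} → {0,1} by T(i,j) = 0 if every point (x_{i,j}) of F satisfies x_{i,j} = 0, and T(i,j) = 1 otherwise. Then T is an a-Tesler tableau. -/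
open Finset
open scoped Classical

/-- If `F` is a (nonempty, exposed) face of the Tesler polytope `Tes_n(a)`, then the
support tableau of `F` — which records a `0` in position `(i,j)` if the coordinate
equality `x_{i,j} = 0` holds on all of `F` and a `1` otherwise — is an `a`-Tesler
tableau. -/
theorem support_of_face_isTeslerTableau (n : ℕ) (a : Fin n → ℕ)
    (F : Set (Fin n → Fin n → ℝ)) (hne : F.Nonempty)
    (hface : IsExposed ℝ (TeslerPolytope n a) F) :
    IsTeslerTableau n a (fun i j => if ∀ x ∈ F, x i j = 0 then 0 else 1) := by
  have hsub : F ⊆ TeslerPolytope n a := hface.subset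
  -- helper: T i j ≠ 1 means all points of F vanish at (i,j)
  have hT0 : ∀ i j : Fin n,
      (if ∀ x ∈ F, x i j = 0 then (0:ℕ) else 1) ≠ 1 → ∀ x ∈ F, x i j = 0 := by
    intro i j h
    by_contra hc
    rw [if_neg hc] at h
    exact h rfl
  have hT1 : ∀ i j : Fin n,
      (if ∀ x ∈ F, x i j = 0 then (0:ℕ) else 1) = 1 → ¬ ∀ x ∈ F, x i j = 0 := by
    intro i j h hc
    rw [if_pos hc] at h
    exact absurd h (by norm_num)
  refine ⟨?_, ?_, ?_, ?_, ?_⟩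
  · -- below diagonal
    intro i j hij
    simp only
    rw [if_pos]
    intro x hx
    exact (hsub hx).1 i j (lt_of_not_ge hij)
  · -- values ≤ 1
    intro i j
    simp only
    split <;> norm_num
  · -- rows with a i > 0 contain a 1
    intro i hi
    by_contra h
    push_neg at h
    obtain ⟨x, hx⟩ := hne
    obtain ⟨hlow, hnn, hsum⟩ := hsub hx
    have hrow : (∑ j ∈ univ.filter (fun j => i ≤ j), x i j) = 0 := by
      refine Finset.sum_eq_zero fun j hj => ?_
      rw [mem_filter] at hj
      exact hT0 i j (fun h1 => absurd h1 (by simpa using h j hj.2)) x hx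
    have hcol : 0 ≤ ∑ i' ∈ univ.filter (fun i' => i' < i), x i' i :=
      Finset.sum_nonneg fun i' hi' => hnn i' i (le_of_lt (by simpa using (mem_filter.mp hi').2))
    have := hsum i
    rw [hrow] at this
    have hai : (0:ℝ) < (a i : ℝ) := by exact_mod_cast hi
    linarith
  · -- condition (2)
    intro i j hij hTij
    have hex : ¬ ∀ x ∈ F, x i j = 0 := hT1 i j hTij
    push_neg at hex
    obtain ⟨x, hx, hxij⟩ := hex
    by_contra h
    push_neg at h
    obtain ⟨hlow, hnn, hsum⟩ := hsub hx
    have hrow : (∑ k ∈ univ.filter (fun k => j ≤ k), x j k) = 0 := by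
      refine Finset.sum_eq_zero fun k hk => ?_
      rw [mem_filter] at hk
      exact hT0 j k (h k hk.2) x hx
    have hxijpos : 0 < x i j := lt_of_le_of_ne (hnn i j (le_of_lt hij)) (Ne.symm hxij)
    have hcol : x i j ≤ ∑ i' ∈ univ.filter (fun i' => i' < j), x i' j := by
      refine Finset.single_le_sum (fun i' hi' => hnn i' j (le_of_lt (by simpa using (mem_filter.mp hi').2))) ?_
      simp [hij]
    have := hsum j
    rw [hrow] at this
    have : (0:ℝ) ≤ (a j : ℝ) := by positivity
    linarith
  · -- condition (3)
    intro j haj hTcol k hjk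
    simp only
    rw [if_pos]
    intro x hx
    obtain ⟨hlow, hnn, hsum⟩ := hsub hx
    have hcol : (∑ i' ∈ univ.filter (fun i' => i' < j), x i' j) = 0 := by
      refine Finset.sum_eq_zero fun i' hi' => ?_
      rw [mem_filter] at hi'
      exact hT0 i' j (fun h1 => absurd h1 (by simpa using hTcol i' hi'.2)) x hx
    have := hsum j
    rw [hcol, haj] at this
    norm_num at this
    have hrow : (∑ k' ∈ univ.filter (fun k' => j ≤ k'), x j k') = 0 := this
    have := (Finset.sum_eq_zero_iff_of_nonneg
      (fun k' hk' => hnn j k' (by simpa using (mem_filter.mp hk').2))).mp hrow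
    exact this k (by simp [hjk])
end

section
/- Let a = (a_1,…,a_n) be a vector of nonnegative integers. The map sending a point x = (x_{i,j}) of Tes_n(a) to its support indicator T_x, defined by T_x(i,j) = 1 if x_{i,j} > 0 and T_x(i,j) = 0 otherwise, restricts to a bijection from the set of extreme points (vertices) of Tes_n(a) onto the set of a-Tesler tableaux of dimension 0. -/
open Finset

namespace TesAux

variable {n : ℕ} {a : Fin n → ℕ}

/-- hook sum -/
def hook (x : Fin n → Fin n → ℝ) (k : Fin n) : ℝ :=
  (∑ j ∈ univ.filter (fun j => k ≤ j), x k j)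
    - (∑ i ∈ univ.filter (fun i => i < k), x i k)

lemma mem_tes_iff {x : Fin n → Fin n → ℝ} :
    x ∈ TeslerPolytope n a ↔
      (∀ i j : Fin n, j < i → x i j = 0) ∧
      (∀ i j : Fin n, i ≤ j → 0 ≤ x i j) ∧
      (∀ k : Fin n, hook x k = (a k : ℝ)) := Iff.rfl

lemma nonneg_of_mem {x : Fin n → Fin n → ℝ} (hx : x ∈ TeslerPolytope n a)
    (i j : Fin n) : 0 ≤ x i j := by
  rcases le_or_gt i j with h | h
  · exact hx.2.1 i j h
  · rw [hx.1 i j h]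

lemma hook_add (x y : Fin n → Fin n → ℝ) (k : Fin n) :
    hook (x + y) k = hook x k + hook y k := by
  simp only [hook, Pi.add_apply, Finset.sum_add_distrib]; ring

lemma hook_smul (c : ℝ) (x : Fin n → Fin n → ℝ) (k : Fin n) :
    hook (c • x) k = c * hook x k := by
  simp only [hook, Pi.smul_apply, smul_eq_mul, ← Finset.mul_sum]; ring

/-- propagation: a positive entry strictly above the diagonal forces a positive
entry in the row of its column. -/
lemma propagate {x : Fin n → Fin n → ℝ} (hx : x ∈ TeslerPolytope n a)
    {i j : Fin n} (hij : i < j) (hpos : 0 < x i j) :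
    ∃ k : Fin n, j ≤ k ∧ 0 < x j k := by
  by_contra hcon
  push_neg at hcon
  have hout : (∑ l ∈ univ.filter (fun l => j ≤ l), x j l) = 0 := by
    apply Finset.sum_eq_zero
    intro l hl
    simp only [mem_filter] at hl
    exact le_antisymm (hcon l hl.2) (hx.2.1 j l hl.2)
  have hin : 0 < (∑ p ∈ univ.filter (fun p => p < j), x p j) := by
    apply Finset.sum_pos' (fun p hp => ?_) ⟨i, by simp [hij], hpos⟩
    simp only [mem_filter] at hp
    exact nonneg_of_mem hx p j
  have := hx.2.2 j
  rw [hout] at this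
  have : (0:ℝ) ≤ (a j : ℝ) := Nat.cast_nonneg _
  linarith [hx.2.2 j, hout ▸ (rfl : (0:ℝ) = 0)]

end TesAux
namespace TesAux

variable {n : ℕ} {a : Fin n → ℕ}

/-- Each row has at most one positive entry. -/
def RowLe1 (x : Fin n → Fin n → ℝ) : Prop :=
  ∀ i j k : Fin n, 0 < x i j → 0 < x i k → j = k

/-- Uniqueness: a point of the polytope supported inside the support of a
row-simple point equals it. -/
lemma unique_of_subset_support {x y : Fin n → Fin n → ℝ}
    (hx : x ∈ TeslerPolytope n a) (hy : y ∈ TeslerPolytope n a)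
    (hrow : RowLe1 x) (hsupp : ∀ i j : Fin n, x i j = 0 → y i j = 0) :
    y = x := by
  have key : ∀ m : ℕ, ∀ i : Fin n, i.val = m → ∀ j : Fin n, y i j = x i j := by
    intro m
    induction m using Nat.strong_induction_on with
    | _ m IH =>
      intro i hi j
      have hin : (∑ p ∈ univ.filter (fun p => p < i), y p i)
          = (∑ p ∈ univ.filter (fun p => p < i), x p i) := by
        apply Finset.sum_congr rfl
        intro p hp
        simp only [mem_filter] at hp
        exact IH p.val (hi ▸ hp.2) p rfl i
      have hsum : (∑ l ∈ univ.filter (fun l => i ≤ l), y i l)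
          = (∑ l ∈ univ.filter (fun l => i ≤ l), x i l) := by
        have h1 := hx.2.2 i
        have h2 := hy.2.2 i
        rw [← hin] at h1
        linarith
      rcases le_or_gt i j with hij | hij
      · rcases eq_or_lt_of_le (nonneg_of_mem hx i j) with h0 | hpos
        · rw [hsupp i j h0.symm, ← h0]
        · have hxs : (∑ l ∈ univ.filter (fun l => i ≤ l), x i l) = x i j := by
            apply Finset.sum_eq_single_of_mem j (by simp [hij])
            intro l hl hne
            rcases eq_or_lt_of_le (nonneg_of_mem hx i l) with h0 | hp
            · exact h0.symm
            · exact absurd (hrow i l j hp hpos) hne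
          have hys : (∑ l ∈ univ.filter (fun l => i ≤ l), y i l) = y i j := by
            apply Finset.sum_eq_single_of_mem j (by simp [hij])
            intro l hl hne
            apply hsupp
            rcases eq_or_lt_of_le (nonneg_of_mem hx i l) with h0 | hp
            · exact h0.symm
            · exact absurd (hrow i l j hp hpos) hne
          rw [← hxs, ← hys, hsum]
      · rw [hx.1 i j hij, hy.1 i j hij]
  funext i j
  exact key i.val i rfl j

/-- A row-simple point of the polytope is extreme. -/
lemma extreme_of_rowLe1 {x : Fin n → Fin n → ℝ}
    (hx : x ∈ TeslerPolytope n a) (hrow : RowLe1 x) :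
    x ∈ Set.extremePoints ℝ (TeslerPolytope n a) := by
  rw [mem_extremePoints]
  refine ⟨hx, fun y hy z hz hseg => ?_⟩
  rw [openSegment_eq_image] at hseg
  obtain ⟨t, ⟨ht0, ht1⟩, hsum⟩ := hseg
  have hxe : ∀ i j : Fin n, (1 - t) * y i j + t * z i j = x i j := by
    intro i j
    have := congrFun (congrFun hsum i) j
    simpa using this
  have hsy : ∀ i j : Fin n, x i j = 0 → y i j = 0 := by
    intro i j h0
    have h1 := hxe i j
    rw [h0] at h1
    have hy0 := nonneg_of_mem hy i j
    have hz0 := nonneg_of_mem hz i j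
    nlinarith
  have hsz : ∀ i j : Fin n, x i j = 0 → z i j = 0 := by
    intro i j h0
    have h1 := hxe i j
    rw [h0] at h1
    have hy0 := nonneg_of_mem hy i j
    have hz0 := nonneg_of_mem hz i j
    nlinarith
  exact ⟨unique_of_subset_support hx hy hrow hsy,
         unique_of_subset_support hx hz hrow hsz⟩

end TesAux
namespace TesAux

variable {n : ℕ} {a : Fin n → ℕ}

/-- elementary matrix -/
def std (p q : Fin n) : Fin n → Fin n → ℝ := fun i j => if i = p ∧ j = q then 1 else 0

lemma hook_zero (k : Fin n) : hook (0 : Fin n → Fin n → ℝ) k = 0 := by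
  simp [hook]

lemma hook_std {p q : Fin n} (hpq : p ≤ q) (k : Fin n) :
    hook (std p q) k
      = (if k = p then 1 else 0) - (if k = q ∧ p < q then 1 else 0) := by
  have sum1 : (∑ j ∈ univ.filter (fun j => k ≤ j), std p q k j)
      = if k = p then (1:ℝ) else 0 := by
    by_cases hkp : k = p
    · rw [if_pos hkp]
      have : ∀ j, std p q k j = if j = q then (1:ℝ) else 0 := by
        intro j; unfold std; simp [hkp]
      simp only [this]
      rw [Finset.sum_ite_eq' (univ.filter (fun j => k ≤ j)) q (fun _ => (1:ℝ))]
      simp [(le_of_eq hkp).trans hpq]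
    · rw [if_neg hkp]
      exact Finset.sum_eq_zero fun j _ => by simp [std, hkp]
  have sum2 : (∑ i ∈ univ.filter (fun i => i < k), std p q i k)
      = if k = q ∧ p < q then (1:ℝ) else 0 := by
    by_cases hkq : k = q
    · have : ∀ i, std p q i k = if i = p then (1:ℝ) else 0 := by
        intro i; unfold std; simp [hkq]
      simp only [this]
      rw [Finset.sum_ite_eq' (univ.filter (fun i => i < k)) p (fun _ => (1:ℝ))]
      by_cases hpk : p < k
      · rw [if_pos (by simp [hpk] : p ∈ univ.filter (fun i => i < k)),
          if_pos ⟨hkq, hkq ▸ hpk⟩]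
      · rw [if_neg (by simp [hpk] : ¬ p ∈ univ.filter (fun i => i < k)),
          if_neg (fun h => hpk (hkq.symm ▸ h.2))]
    · rw [if_neg (fun h => hkq h.1)]
      exact Finset.sum_eq_zero fun i _ => by simp [std, hkq]
  unfold hook
  rw [sum1, sum2]

/-- next positive entry in a row, or the row itself -/
noncomputable def nxt (x : Fin n → Fin n → ℝ) (r : Fin n) : Fin n :=
  if h : ∃ c, r ≤ c ∧ 0 < x r c then h.choose else r

lemma le_nxt (x : Fin n → Fin n → ℝ) (r : Fin n) : r ≤ nxt x r := by
  unfold nxt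
  split
  · next h => exact h.choose_spec.1
  · exact le_refl r

lemma nxt_pos {x : Fin n → Fin n → ℝ} {r : Fin n}
    (h : ∃ c, r ≤ c ∧ 0 < x r c) : 0 < x r (nxt x r) := by
  unfold nxt
  rw [dif_pos h]
  exact h.choose_spec.2

/-- the indicator of a maximal chain of positive entries starting in row `r` -/
noncomputable def chain (x : Fin n → Fin n → ℝ) (r : Fin n) : Fin n → Fin n → ℝ :=
  std r (nxt x r) +
    (if h : r < nxt x r then chain x (nxt x r) else 0)
termination_by n - r.val
decreasing_by
  have h2 := (nxt x r).isLt
  have h3 : r.val < (nxt x r).val := h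
  omega

lemma chain_supp (x : Fin n → Fin n → ℝ) :
    ∀ m (r : Fin n), n - r.val = m →
      ∀ i j : Fin n, chain x r i j ≠ 0 → r ≤ i ∧ i ≤ j := by
  intro m
  induction m using Nat.strong_induction_on with
  | _ m IH =>
    intro r hr i j hne
    rw [chain] at hne
    simp only [Pi.add_apply] at hne
    by_cases hc : i = r ∧ j = nxt x r
    · exact ⟨le_of_eq hc.1.symm, hc.1 ▸ hc.2 ▸ le_nxt x r⟩
    · have h1 : std r (nxt x r) i j = 0 := by simp [std, hc]
      rw [h1, zero_add] at hne
      split at hne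
      · next h =>
        have h2 := (nxt x r).isLt
        have h3 : r.val < (nxt x r).val := h
        have := IH (n - (nxt x r).val) (by omega) (nxt x r) rfl i j hne
        exact ⟨le_trans (le_of_lt h) this.1, this.2⟩
      · simp at hne

lemma chain_pos_supp {x : Fin n → Fin n → ℝ} (hx : x ∈ TeslerPolytope n a) :
    ∀ m (r : Fin n), n - r.val = m → (∃ c, r ≤ c ∧ 0 < x r c) →
      ∀ i j : Fin n, chain x r i j ≠ 0 → 0 < x i j := by
  intro m
  induction m using Nat.strong_induction_on with
  | _ m IH =>
    intro r hr hex i j hne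
    rw [chain] at hne
    simp only [Pi.add_apply] at hne
    by_cases hc : i = r ∧ j = nxt x r
    · rw [hc.1, hc.2]; exact nxt_pos hex
    · have h1 : std r (nxt x r) i j = 0 := by simp [std, hc]
      rw [h1, zero_add] at hne
      split at hne
      · next h =>
        have h2 := (nxt x r).isLt
        have h3 : r.val < (nxt x r).val := h
        have hex' : ∃ c, nxt x r ≤ c ∧ 0 < x (nxt x r) c :=
          propagate hx h (nxt_pos hex)
        exact IH (n - (nxt x r).val) (by omega) (nxt x r) rfl hex' i j hne
      · simp at hne

lemma chain_mem01 (x : Fin n → Fin n → ℝ) :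
    ∀ m (r : Fin n), n - r.val = m →
      ∀ i j : Fin n, chain x r i j = 0 ∨ chain x r i j = 1 := by
  intro m
  induction m using Nat.strong_induction_on with
  | _ m IH =>
    intro r hr i j
    rw [chain]
    simp only [Pi.add_apply]
    by_cases hc : i = r ∧ j = nxt x r
    · have h1 : std r (nxt x r) i j = 1 := by simp [std, hc]
      have h2 : (if h : r < nxt x r then chain x (nxt x r) else 0) i j = 0 := by
        split
        · next h =>
          by_contra hne
          have := (chain_supp x (n - (nxt x r).val) (nxt x r) rfl i j hne).1
          rw [hc.1] at this
          exact absurd (lt_of_lt_of_le h this) (lt_irrefl r)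
        · rfl
      rw [h1, h2]; right; ring
    · have h1 : std r (nxt x r) i j = 0 := by simp [std, hc]
      rw [h1, zero_add]
      split
      · next h =>
        have h2 := (nxt x r).isLt
        have h3 : r.val < (nxt x r).val := h
        exact IH (n - (nxt x r).val) (by omega) (nxt x r) rfl i j
      · left; rfl

lemma chain_hook (x : Fin n → Fin n → ℝ) :
    ∀ m (r : Fin n), n - r.val = m →
      ∀ k : Fin n, hook (chain x r) k = if k = r then 1 else 0 := by
  intro m
  induction m using Nat.strong_induction_on with
  | _ m IH =>
    intro r hr k
    by_cases h : r < nxt x r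
    · rw [chain]
      simp only [dif_pos h]
      rw [hook_add, hook_std (le_nxt x r)]
      have h2 := (nxt x r).isLt
      have h3 : r.val < (nxt x r).val := h
      rw [IH (n - (nxt x r).val) (by omega) (nxt x r) rfl k]
      have hner : r ≠ nxt x r := ne_of_lt h
      rcases eq_or_ne k r with rfl | hkr
      · simp [hner]
      · rcases eq_or_ne k (nxt x r) with rfl | hkn
        · simp [hkr, h]
        · simp [hkr, hkn]
    · rw [chain]
      simp only [dif_neg h]
      rw [hook_add, hook_std (le_nxt x r), hook_zero]
      have heq : nxt x r = r := le_antisymm (not_lt.mp h) (le_nxt x r)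
      rcases eq_or_ne k r with rfl | hkr
      · simp [heq]
      · simp [heq, hkr]

end TesAux
namespace TesAux

variable {n : ℕ} {a : Fin n → ℕ}

lemma hook_sub (x y : Fin n → Fin n → ℝ) (k : Fin n) :
    hook (x - y) k = hook x k - hook y k := by
  simp only [hook, Pi.sub_apply, Finset.sum_sub_distrib]; ring

/-- the one-sided perturbation vector attached to a positive entry `(i0, j)` -/
noncomputable def pert (x : Fin n → Fin n → ℝ) (i0 j : Fin n) : Fin n → Fin n → ℝ :=
  std i0 j + (if i0 < j then chain x j else 0)

lemma pert_hook {x : Fin n → Fin n → ℝ} {i0 j : Fin n} (hij : i0 ≤ j) (l : Fin n) :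
    hook (pert x i0 j) l = if l = i0 then 1 else 0 := by
  unfold pert
  rw [hook_add, hook_std hij]
  by_cases h : i0 < j
  · simp only [if_pos h]
    rw [chain_hook x (n - j.val) j rfl l]
    rcases eq_or_ne l i0 with rfl | hli
    · have hlj : l ≠ j := ne_of_lt h
      simp [hlj]
    · rcases eq_or_ne l j with rfl | hlj
      · simp [hli, h]
      · simp [hli, hlj]
  · have hji : j = i0 := le_antisymm (not_lt.mp h) hij
    simp only [if_neg h, hook_zero]
    rcases eq_or_ne l i0 with rfl | hli
    · simp [hji]
    · simp [hji, hli]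

lemma pert_mem01 (x : Fin n → Fin n → ℝ) (i0 j : Fin n) (l m : Fin n) :
    pert x i0 j l m = 0 ∨ pert x i0 j l m = 1 := by
  unfold pert
  simp only [Pi.add_apply]
  by_cases h : i0 < j
  · simp only [if_pos h]
    by_cases hc : l = i0 ∧ m = j
    · have h1 : std i0 j l m = 1 := by simp [std, hc]
      have h2 : chain x j l m = 0 := by
        by_contra hne
        have := (chain_supp x (n - j.val) j rfl l m hne).1
        rw [hc.1] at this
        exact absurd (lt_of_lt_of_le h this) (lt_irrefl i0)
      rw [h1, h2]; right; ring
    · have h1 : std i0 j l m = 0 := by simp [std, hc]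
      rw [h1, zero_add]
      exact chain_mem01 x (n - j.val) j rfl l m
  · simp only [if_neg h, Pi.zero_apply, add_zero]
    unfold std
    by_cases hc : l = i0 ∧ m = j <;> simp [hc]

lemma pert_supp {x : Fin n → Fin n → ℝ} (hx : x ∈ TeslerPolytope n a)
    {i0 j : Fin n} (hij : i0 ≤ j) (hpos : 0 < x i0 j) (l m : Fin n) :
    pert x i0 j l m ≠ 0 → 0 < x l m := by
  intro hne
  unfold pert at hne
  simp only [Pi.add_apply] at hne
  by_cases hc : l = i0 ∧ m = j
  · rw [hc.1, hc.2]; exact hpos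
  · have h1 : std i0 j l m = 0 := by simp [std, hc]
    rw [h1, zero_add] at hne
    by_cases h : i0 < j
    · rw [if_pos h] at hne
      exact chain_pos_supp hx (n - j.val) j rfl (propagate hx h hpos) l m hne
    · rw [if_neg h] at hne
      simp at hne

lemma pert_tri (x : Fin n → Fin n → ℝ) (i0 j : Fin n) (hij : i0 ≤ j) (l m : Fin n) :
    pert x i0 j l m ≠ 0 → l ≤ m := by
  intro hne
  unfold pert at hne
  simp only [Pi.add_apply] at hne
  by_cases hc : l = i0 ∧ m = j
  · rw [hc.1, hc.2]; exact hij
  · have h1 : std i0 j l m = 0 := by simp [std, hc]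
    rw [h1, zero_add] at hne
    by_cases h : i0 < j
    · rw [if_pos h] at hne
      exact (chain_supp x (n - j.val) j rfl l m hne).2
    · rw [if_neg h] at hne
      simp at hne

lemma pert_row (x : Fin n → Fin n → ℝ) {i0 j : Fin n} (hij : i0 ≤ j) (m : Fin n)
    (hm : m ≠ j) : pert x i0 j i0 m = 0 := by
  unfold pert
  simp only [Pi.add_apply]
  have h1 : std i0 j i0 m = 0 := by simp [std, hm]
  rcases lt_or_eq_of_le hij with h | h
  · have h2 : chain x j i0 m = 0 := by
      by_contra hne
      have := (chain_supp x (n - j.val) j rfl i0 m hne).1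
      exact absurd (lt_of_lt_of_le h this) (lt_irrefl i0)
    rw [if_pos h, h1, h2, add_zero]
  · rw [if_neg (by rw [← h]; exact lt_irrefl i0), h1]
    simp

lemma pert_self (x : Fin n → Fin n → ℝ) {i0 j : Fin n} (hij : i0 ≤ j) :
    pert x i0 j i0 j = 1 := by
  unfold pert
  simp only [Pi.add_apply]
  have h1 : std i0 j i0 j = 1 := by simp [std]
  by_cases h : i0 < j
  · have h2 : chain x j i0 j = 0 := by
      by_contra hne
      have := (chain_supp x (n - j.val) j rfl i0 j hne).1
      exact absurd (lt_of_lt_of_le h this) (lt_irrefl i0)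
    simp only [if_pos h]
    rw [h1, h2, add_zero]
  · simp only [if_neg h]
    rw [h1]; simp

/-- Extreme points of the Tesler polytope have at most one positive entry
in each row. -/
lemma rowLe1_of_extreme {x : Fin n → Fin n → ℝ}
    (hx : x ∈ Set.extremePoints ℝ (TeslerPolytope n a)) : RowLe1 x := by
  intro i0 j k hj hk
  by_contra hne
  rw [mem_extremePoints] at hx
  have hmem := hx.1
  have hij : i0 ≤ j := by
    by_contra h
    rw [hmem.1 i0 j (not_le.mp h)] at hj
    exact lt_irrefl 0 hj
  have hik : i0 ≤ k := by
    by_contra h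
    rw [hmem.1 i0 k (not_le.mp h)] at hk
    exact lt_irrefl 0 hk
  set δ := pert x i0 j - pert x i0 k with hδ
  -- key pointwise facts
  have hδsupp : ∀ l m : Fin n, δ l m ≠ 0 → 0 < x l m := by
    intro l m h
    simp only [hδ, Pi.sub_apply] at h
    rcases ne_or_eq (pert x i0 j l m) 0 with h' | h'
    · exact pert_supp hmem hij hj l m h'
    · rw [h'] at h
      exact pert_supp hmem hik hk l m (fun hh => h (by rw [hh, sub_zero]))
  have hδtri : ∀ l m : Fin n, ¬ l ≤ m → δ l m = 0 := by
    intro l m h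
    simp only [hδ, Pi.sub_apply]
    rw [of_not_not (fun hh => h (pert_tri x i0 j hij l m hh)),
        of_not_not (fun hh => h (pert_tri x i0 k hik l m hh)), sub_zero]
  have hδbd : ∀ l m : Fin n, |δ l m| ≤ 1 := by
    intro l m
    simp only [hδ, Pi.sub_apply]
    rcases pert_mem01 x i0 j l m with h1 | h1 <;>
      rcases pert_mem01 x i0 k l m with h2 | h2 <;>
        rw [h1, h2] <;> norm_num
  have hδij : δ i0 j = 1 := by
    simp only [hδ, Pi.sub_apply]
    rw [pert_self x hij, pert_row x hik j hne, sub_zero]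
  have hδhook : ∀ l : Fin n, hook δ l = 0 := by
    intro l
    rw [hδ, hook_sub, pert_hook hij, pert_hook hik, sub_self]
  -- choose ε
  set S := (univ ×ˢ univ : Finset (Fin n × Fin n)).filter (fun p => δ p.1 p.2 ≠ 0) with hS
  have hSne : S.Nonempty := ⟨(i0, j), by simp [hS, hδij]⟩
  set ε := S.inf' hSne (fun p => x p.1 p.2) with hε
  have hεpos : 0 < ε := by
    rw [hε, Finset.lt_inf'_iff]
    intro p hp
    rw [hS, mem_filter] at hp
    exact hδsupp p.1 p.2 hp.2
  have hεle : ∀ l m : Fin n, δ l m ≠ 0 → ε ≤ x l m := by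
    intro l m h
    have hmemS : (l, m) ∈ S := by
      rw [hS, mem_filter]
      exact ⟨by simp, h⟩
    exact Finset.inf'_le _ hmemS
  -- the two perturbed points
  set y := x + ε • δ with hy
  set z := x - ε • δ with hz
  have hymem : y ∈ TeslerPolytope n a := by
    refine ⟨?_, ?_, ?_⟩
    · intro l m h
      simp only [hy, Pi.add_apply, Pi.smul_apply, smul_eq_mul]
      rw [hmem.1 l m h, hδtri l m (not_le.mpr h)]
      ring
    · intro l m h
      simp only [hy, Pi.add_apply, Pi.smul_apply, smul_eq_mul]
      rcases eq_or_ne (δ l m) 0 with h0 | h0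
      · rw [h0, mul_zero, add_zero]; exact hmem.2.1 l m h
      · have h1 := hεle l m h0
        have h2 := abs_le.mp (hδbd l m)
        nlinarith
    · intro l
      have : hook y l = (a l : ℝ) := by
        rw [hy, hook_add, hook_smul, hδhook, mul_zero, add_zero]
        exact hmem.2.2 l
      exact this
  have hzmem : z ∈ TeslerPolytope n a := by
    refine ⟨?_, ?_, ?_⟩
    · intro l m h
      simp only [hz, Pi.sub_apply, Pi.smul_apply, smul_eq_mul]
      rw [hmem.1 l m h, hδtri l m (not_le.mpr h)]
      ring
    · intro l m h
      simp only [hz, Pi.sub_apply, Pi.smul_apply, smul_eq_mul]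
      rcases eq_or_ne (δ l m) 0 with h0 | h0
      · rw [h0, mul_zero, sub_zero]; exact hmem.2.1 l m h
      · have h1 := hεle l m h0
        have h2 := abs_le.mp (hδbd l m)
        nlinarith
    · intro l
      have : hook z l = (a l : ℝ) := by
        rw [hz, hook_sub, hook_smul, hδhook, mul_zero, sub_zero]
        exact hmem.2.2 l
      exact this
  have hseg : x ∈ openSegment ℝ y z := by
    rw [openSegment_eq_image]
    refine ⟨1/2, by norm_num, ?_⟩
    funext l m
    rw [hy, hz]
    simp only [Pi.add_apply, Pi.sub_apply, Pi.smul_apply, smul_eq_mul]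
    ring
  have := (hx.2 y hymem z hzmem hseg).1
  have hcontra := congrFun (congrFun this i0) j
  simp only [hy, Pi.add_apply, Pi.smul_apply, smul_eq_mul] at hcontra
  rw [hδij] at hcontra
  nlinarith

end TesAux
namespace TesAux

variable {n : ℕ}

/-- the point of the polytope built from a zero-dimensional tableau -/
noncomputable def build (a : Fin n → ℕ) (T : Fin n → Fin n → ℕ) (i : Fin n) :
    Fin n → ℝ :=
  fun j =>
    if T i j = 1 then
      (a i : ℝ) + ∑ p ∈ (univ.filter (fun p : Fin n => p < i)).attach, build a T p.1 i
    else 0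
termination_by i.val
decreasing_by
  have hp := p.2
  simp only [mem_filter] at hp
  exact hp.2

lemma build_eq (a : Fin n → ℕ) (T : Fin n → Fin n → ℕ) (i j : Fin n) :
    build a T i j = if T i j = 1 then
      (a i : ℝ) + ∑ p ∈ univ.filter (fun p : Fin n => p < i), build a T p i
    else 0 := by
  rw [build, ← Finset.sum_attach (univ.filter (fun p : Fin n => p < i))
    (fun p => build a T p i)]

lemma build_ne_zero {a : Fin n → ℕ} {T : Fin n → Fin n → ℕ} {i j : Fin n}
    (h : build a T i j ≠ 0) : T i j = 1 := by
  rw [build_eq] at h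
  by_contra hc
  rw [if_neg hc] at h
  exact h rfl

variable {a : Fin n → ℕ} {T : Fin n → Fin n → ℕ}

lemma build_pos (hT : IsTeslerTableau n a T) :
    ∀ m (i : Fin n), i.val = m → ∀ j : Fin n, T i j = 1 → 0 < build a T i j := by
  intro m
  induction m using Nat.strong_induction_on with
  | _ m IH =>
    intro i hi j hTij
    have hnn : ∀ p ∈ univ.filter (fun p : Fin n => p < i), 0 ≤ build a T p i := by
      intro p hp
      simp only [mem_filter] at hp
      rcases eq_or_ne (build a T p i) 0 with h0 | h0
      · rw [h0]
      · exact le_of_lt (IH p.val (hi ▸ hp.2) p rfl i (build_ne_zero h0))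
    rw [build_eq, if_pos hTij]
    rcases Nat.eq_zero_or_pos (a i) with ha | ha
    · -- a i = 0 : some entry above feeds row i
      have hij : i ≤ j := by
        by_contra hc
        rw [hT.1 i j hc] at hTij
        exact absurd hTij (by norm_num)
      have hex : ∃ p : Fin n, p < i ∧ T p i = 1 := by
        by_contra hc
        push_neg at hc
        have hz : ∀ p : Fin n, p < i → T p i = 0 := by
          intro p hp
          have := hT.2.1 p i
          have := hc p hp
          omega
        have := hT.2.2.2.2 i ha hz j hij
        omega
      obtain ⟨p, hpi, hTp⟩ := hex
      have hpos : 0 < build a T p i := IH p.val (hi ▸ hpi) p rfl i hTp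
      have hsum : 0 < ∑ p ∈ univ.filter (fun p : Fin n => p < i), build a T p i :=
        Finset.sum_pos' hnn ⟨p, by simp [hpi], hpos⟩
      have : (0:ℝ) ≤ (a i : ℝ) := Nat.cast_nonneg _
      linarith
    · have hsum : 0 ≤ ∑ p ∈ univ.filter (fun p : Fin n => p < i), build a T p i :=
        Finset.sum_nonneg hnn
      have : (0:ℝ) < (a i : ℝ) := by exact_mod_cast ha
      linarith

lemma build_nonneg (hT : IsTeslerTableau n a T) (i j : Fin n) :
    0 ≤ build a T i j := by
  rcases eq_or_ne (build a T i j) 0 with h0 | h0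
  · rw [h0]
  · exact le_of_lt (build_pos hT i.val i rfl j (build_ne_zero h0))

lemma build_mem (hT : IsTeslerTableau n a T)
    (hdim : ∀ i : Fin n, (univ.filter (fun j => T i j = 1)).card ≤ 1) :
    build a T ∈ TeslerPolytope n a := by
  refine ⟨?_, fun i j _ => build_nonneg hT i j, ?_⟩
  · intro i j hji
    rw [build_eq, if_neg]
    rw [hT.1 i j (not_le.mpr hji)]
    norm_num
  · intro i
    show hook (build a T) i = (a i : ℝ)
    by_cases hex : ∃ j0 : Fin n, T i j0 = 1
    · obtain ⟨j0, hj0⟩ := hex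
      have huniq : ∀ l : Fin n, T i l = 1 → l = j0 := by
        intro l hl
        exact Finset.card_le_one.mp (hdim i) l (by simp [hl]) j0 (by simp [hj0])
      have hij0 : i ≤ j0 := by
        by_contra hc
        rw [hT.1 i j0 hc] at hj0
        omega
      have hout : (∑ l ∈ univ.filter (fun l => i ≤ l), build a T i l)
          = build a T i j0 := by
        apply Finset.sum_eq_single_of_mem j0 (by simp [hij0])
        intro l _ hne
        rw [build_eq, if_neg (fun h => hne (huniq l h))]
      unfold hook
      rw [hout, build_eq, if_pos hj0]
      ring
    · push_neg at hex
      have hout : (∑ l ∈ univ.filter (fun l => i ≤ l), build a T i l) = 0 := by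
        apply Finset.sum_eq_zero
        intro l _
        rw [build_eq, if_neg (hex l)]
      have hin : (∑ p ∈ univ.filter (fun p => p < i), build a T p i) = 0 := by
        apply Finset.sum_eq_zero
        intro p hp
        simp only [mem_filter] at hp
        by_contra hne
        have hTp : T p i = 1 := build_ne_zero hne
        obtain ⟨k, hk, hTk⟩ := hT.2.2.2.1 p i hp.2 hTp
        exact absurd hTk (by have := hex k; omega)
      have ha : a i = 0 := by
        by_contra hne
        obtain ⟨l, _, hl⟩ := hT.2.2.1 i (Nat.pos_of_ne_zero hne)
        exact absurd hl (by have := hex l; omega)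
      unfold hook
      rw [hout, hin, ha]
      norm_num

lemma build_rowLe1 (hdim : ∀ i : Fin n, (univ.filter (fun j => T i j = 1)).card ≤ 1) :
    RowLe1 (build a T) := by
  intro i j k hj hk
  have h1 : T i j = 1 := build_ne_zero (ne_of_gt hj)
  have h2 : T i k = 1 := build_ne_zero (ne_of_gt hk)
  exact Finset.card_le_one.mp (hdim i) j (by simp [h1]) k (by simp [h2])

lemma build_indicator (hT : IsTeslerTableau n a T) :
    (fun i j : Fin n => if 0 < build a T i j then (1:ℕ) else 0) = T := by
  funext i j
  rcases eq_or_ne (T i j) 1 with h | h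
  · rw [if_pos (build_pos hT i.val i rfl j h), h]
  · have h0 : T i j = 0 := by have := hT.2.1 i j; omega
    have hb : build a T i j = 0 := by
      by_contra hne
      exact h (build_ne_zero hne)
    rw [hb, h0, if_neg (lt_irrefl 0)]

lemma tabDim_zero_iff :
    tabDim n T = 0 ↔ ∀ i : Fin n, (univ.filter (fun j => T i j = 1)).card ≤ 1 := by
  unfold tabDim
  rw [Finset.sum_eq_zero_iff]
  constructor
  · intro h i
    have := h i (mem_univ i)
    omega
  · intro h i _
    have := h i
    omega

end TesAux

/-- The support map `x ↦ T_x`, where `T_x(i,j) = 1` if `x_{i,j} > 0` and `0`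
otherwise, is a bijection from the set of extreme points (vertices) of `Tes_n(a)`
onto the set of zero-dimensional `a`-Tesler tableaux. -/
theorem support_bijOn_vertices (n : ℕ) (a : Fin n → ℕ) :
    Set.BijOn (fun x : Fin n → Fin n → ℝ => fun i j : Fin n => if 0 < x i j then 1 else 0)
      (Set.extremePoints ℝ (TeslerPolytope n a))
      {T : Fin n → Fin n → ℕ | IsTeslerTableau n a T ∧ tabDim n T = 0} := by
  classical
  refine ⟨?_, ?_, ?_⟩
  · -- MapsTo
    intro x hx
    have hmem : x ∈ TeslerPolytope n a := hx.1
    have hrow := TesAux.rowLe1_of_extreme hx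
    have hpos_le : ∀ i j : Fin n, 0 < x i j → i ≤ j := by
      intro i j h
      by_contra hc
      rw [hmem.1 i j (not_le.mp hc)] at h
      exact lt_irrefl 0 h
    show IsTeslerTableau n a (fun i j : Fin n => if 0 < x i j then 1 else 0) ∧
      tabDim n (fun i j : Fin n => if 0 < x i j then 1 else 0) = 0
    constructor
    · refine ⟨?_, ?_, ?_, ?_, ?_⟩
      · intro i j hij
        show (if 0 < x i j then (1:ℕ) else 0) = 0
        rw [if_neg (fun h => hij (hpos_le i j h))]
      · intro i j
        show (if 0 < x i j then (1:ℕ) else 0) ≤ 1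
        split <;> omega
      · intro i hai
        have hex : ∃ j : Fin n, i ≤ j ∧ 0 < x i j := by
          by_contra hc
          push_neg at hc
          have hout : (∑ l ∈ univ.filter (fun l => i ≤ l), x i l) = 0 := by
            apply Finset.sum_eq_zero
            intro l hl
            simp only [mem_filter] at hl
            exact le_antisymm (hc l hl.2) (hmem.2.1 i l hl.2)
          have hin : 0 ≤ (∑ p ∈ univ.filter (fun p => p < i), x p i) :=
            Finset.sum_nonneg fun p _ => TesAux.nonneg_of_mem hmem p i
          have hhook := hmem.2.2 i
          rw [hout] at hhook
          have : (0:ℝ) < (a i : ℝ) := by exact_mod_cast hai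
          linarith
        obtain ⟨j, hij, hpos⟩ := hex
        refine ⟨j, hij, ?_⟩
        show (if 0 < x i j then (1:ℕ) else 0) = 1
        rw [if_pos hpos]
      · intro i j hij h1
        have h1' : (if 0 < x i j then (1:ℕ) else 0) = 1 := h1
        have hpos : 0 < x i j := by
          by_contra hc
          rw [if_neg hc] at h1'
          exact absurd h1' (by omega)
        obtain ⟨k, hk, hkpos⟩ := TesAux.propagate hmem hij hpos
        refine ⟨k, hk, ?_⟩
        show (if 0 < x j k then (1:ℕ) else 0) = 1
        rw [if_pos hkpos]
      · intro j haj hzero k hjk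
        have hzero' : ∀ p : Fin n, p < j → (if 0 < x p j then (1:ℕ) else 0) = 0 :=
          fun p hp => hzero p hp
        have hin : (∑ p ∈ univ.filter (fun p => p < j), x p j) = 0 := by
          apply Finset.sum_eq_zero
          intro p hp
          simp only [mem_filter] at hp
          have := hzero' p hp.2
          by_contra hne
          rcases lt_or_eq_of_le (TesAux.nonneg_of_mem hmem p j) with hlt | heq
          · rw [if_pos hlt] at this
            omega
          · exact hne heq.symm
        have hhook := hmem.2.2 j
        rw [hin, haj] at hhook
        have hsum0 : (∑ l ∈ univ.filter (fun l => j ≤ l), x j l) = 0 := by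
          push_cast at hhook
          linarith
        have hterm : ∀ l ∈ univ.filter (fun l => j ≤ l), x j l = 0 :=
          (Finset.sum_eq_zero_iff_of_nonneg
            (fun l hl => by
              simp only [mem_filter] at hl
              exact hmem.2.1 j l hl.2)).mp hsum0
        have hk0 := hterm k (by simp [hjk])
        show (if 0 < x j k then (1:ℕ) else 0) = 0
        rw [if_neg (by rw [hk0]; exact lt_irrefl 0)]
    · rw [TesAux.tabDim_zero_iff]
      intro i
      apply Finset.card_le_one.mpr
      intro j hj k hk
      simp only [mem_filter] at hj hk
      have hj' : 0 < x i j := by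
        by_contra hc
        have hj2 : (if 0 < x i j then (1:ℕ) else 0) = 1 := hj.2
        rw [if_neg hc] at hj2
        omega
      have hk' : 0 < x i k := by
        by_contra hc
        have hk2 : (if 0 < x i k then (1:ℕ) else 0) = 1 := hk.2
        rw [if_neg hc] at hk2
        omega
      exact hrow i j k hj' hk'
  · -- InjOn
    intro x hx y hy hxy
    have hxm : x ∈ TeslerPolytope n a := hx.1
    have hym : y ∈ TeslerPolytope n a := hy.1
    have hrow := TesAux.rowLe1_of_extreme hx
    have hsupp : ∀ i j : Fin n, x i j = 0 → y i j = 0 := by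
      intro i j h0
      rcases le_or_gt i j with hij | hij
      · have heq : (if 0 < x i j then (1:ℕ) else 0) = (if 0 < y i j then 1 else 0) :=
          congrFun (congrFun hxy i) j
        rw [if_neg (by rw [h0]; exact lt_irrefl 0)] at heq
        by_contra hne
        rcases lt_or_eq_of_le (hym.2.1 i j hij) with hlt | hs
        · rw [if_pos hlt] at heq
          omega
        · exact hne hs.symm
      · exact hym.1 i j hij
    exact (TesAux.unique_of_subset_support hxm hym hrow hsupp).symm
  · -- SurjOn
    intro T hT
    obtain ⟨hTT, hdim⟩ := hT
    have hdim' := TesAux.tabDim_zero_iff.mp hdim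
    refine ⟨TesAux.build a T, ?_, ?_⟩
    · exact TesAux.extreme_of_rowLe1 (TesAux.build_mem hTT hdim')
        (TesAux.build_rowLe1 hdim')
    · exact TesAux.build_indicator hTT
end

section
/- Let a = (a_1,…,a_n) be a vector of nonnegative integers. The support map φ, sending a face F of Tes_n(a) to the tableau φ(F) defined by φ(F)(i,j) = 0 if every point of F satisfies x_{i,j} = 0 and φ(F)(i,j) = 1 otherwise, is an order isomorphism from the poset of faces of Tes_n(a) ordered by inclusion onto the poset of a-Tesler tableaux ordered componentwise. Moreover, for every face F, the affine dimension of F equals dim(φ(F)). -/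
open Finset
open scoped Classical

/-- The support tableau of a subset `F` of the Tesler polytope: a `0` in position
`(i,j)` if `x_{i,j} = 0` holds on all of `F`, and a `1` otherwise. -/
noncomputable def suppTab (n : ℕ) (F : Set (Fin n → Fin n → ℝ)) : Fin n → Fin n → ℕ :=
  fun i j => if ∀ x ∈ F, x i j = 0 then 0 else 1

namespace TeslerAux

variable {n : ℕ}

lemma fin_strong {C : Fin n → Prop} (h : ∀ i, (∀ j, j < i → C j) → C i) (i : Fin n) : C i :=
  (IsWellFounded.wf (r := ((· < ·) : Fin n → Fin n → Prop))).induction i h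

/-- hook sum -/
def hsum (x : Fin n → Fin n → ℝ) (k : Fin n) : ℝ :=
  (∑ j ∈ univ.filter (fun j => k ≤ j), x k j) - ∑ i ∈ univ.filter (fun i => i < k), x i k

lemma mem_tesler {a : Fin n → ℕ} {x : Fin n → Fin n → ℝ} :
    x ∈ TeslerPolytope n a ↔ (∀ i j, j < i → x i j = 0) ∧ (∀ i j, i ≤ j → 0 ≤ x i j) ∧
      ∀ k, hsum x k = a k := Iff.rfl

lemma hsum_comb (c1 c2 : ℝ) (x y : Fin n → Fin n → ℝ) (k : Fin n) :
    hsum (fun i j => c1 * x i j + c2 * y i j) k = c1 * hsum x k + c2 * hsum y k := by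
  unfold hsum
  rw [Finset.sum_add_distrib, Finset.sum_add_distrib, ← Finset.mul_sum, ← Finset.mul_sum,
    ← Finset.mul_sum, ← Finset.mul_sum]
  ring

def rowNZ (T : Fin n → Fin n → ℕ) (i : Fin n) : Prop := ∃ j, T i j = 1

/-- recursive mass construction -/
noncomputable def mass (a : Fin n → ℕ) (T : Fin n → Fin n → ℕ) (σ : Fin n → Fin n) :
    Fin n → ℝ
  | i => (a i : ℝ) + ∑ p ∈ (univ.filter (fun i' : Fin n => i' < i)).attach,
      if rowNZ T p.1 ∧ σ p.1 = i then mass a T σ p.1 else 0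
  termination_by i => i.1
  decreasing_by
    · have hp := p.2
      simp only [mem_filter, mem_univ, true_and] at hp
      exact hp

noncomputable def xpt (a : Fin n → ℕ) (T : Fin n → Fin n → ℕ) (σ : Fin n → Fin n) :
    Fin n → Fin n → ℝ :=
  fun i j => if rowNZ T i ∧ σ i = j then mass a T σ i else 0

lemma mass_eq (a : Fin n → ℕ) (T : Fin n → Fin n → ℕ) (σ : Fin n → Fin n) (i : Fin n) :
    mass a T σ i = (a i : ℝ) + ∑ i' ∈ univ.filter (fun i' => i' < i), xpt a T σ i' i := by
  rw [mass]
  congr 1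
  rw [← Finset.sum_attach (univ.filter (fun i' => i' < i)) (fun i' => xpt a T σ i' i)]
  rfl

lemma mass_nonneg (a : Fin n → ℕ) (T : Fin n → Fin n → ℕ) (σ : Fin n → Fin n) (i : Fin n) :
    0 ≤ mass a T σ i := by
  induction i using fin_strong with
  | h i ih =>
    rw [mass_eq]
    have : 0 ≤ ∑ i' ∈ univ.filter (fun i' => i' < i), xpt a T σ i' i := by
      apply Finset.sum_nonneg
      intro i' hi'
      simp only [mem_filter, mem_univ, true_and] at hi'
      unfold xpt
      split
      · exact ih i' hi'
      · exact le_refl 0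
    exact add_nonneg (Nat.cast_nonneg _) this

lemma xpt_nonneg (a : Fin n → ℕ) (T : Fin n → Fin n → ℕ) (σ : Fin n → Fin n) (i j : Fin n) :
    0 ≤ xpt a T σ i j := by
  unfold xpt; split
  · exact mass_nonneg a T σ i
  · exact le_refl 0

def validC (T : Fin n → Fin n → ℕ) (σ : Fin n → Fin n) : Prop :=
  ∀ i, rowNZ T i → T i (σ i) = 1

lemma xpt_supp {a : Fin n → ℕ} {T : Fin n → Fin n → ℕ} {σ : Fin n → Fin n}
    (hσ : validC T σ) {i j : Fin n} (h : T i j = 0) : xpt a T σ i j = 0 := by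
  unfold xpt
  rw [if_neg]
  rintro ⟨h1, h2⟩
  have := hσ i h1
  rw [h2, h] at this
  exact absurd this (by norm_num)

variable {a : Fin n → ℕ} {T : Fin n → Fin n → ℕ} {σ : Fin n → Fin n}

lemma le_sigma (hT : IsTeslerTableau n a T) (hσ : validC T σ) {i : Fin n} (h : rowNZ T i) :
    i ≤ σ i := by
  by_contra hc
  have := hT.1 i (σ i) hc
  rw [hσ i h] at this
  exact absurd this (by norm_num)

lemma rowsum_xpt (hT : IsTeslerTableau n a T) (hσ : validC T σ) (k : Fin n) :
    ∑ j ∈ univ.filter (fun j => k ≤ j), xpt a T σ k j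
      = if rowNZ T k then mass a T σ k else 0 := by
  by_cases hk : rowNZ T k
  · rw [if_pos hk]
    have hmem : σ k ∈ univ.filter (fun j => k ≤ j) := by
      simp only [mem_filter, mem_univ, true_and]
      exact le_sigma hT hσ hk
    rw [Finset.sum_eq_single_of_mem (σ k) hmem]
    · unfold xpt; rw [if_pos ⟨hk, rfl⟩]
    · intro b _ hb
      unfold xpt
      rw [if_neg]
      rintro ⟨-, h2⟩
      exact hb h2.symm
  · rw [if_neg hk]
    apply Finset.sum_eq_zero
    intro j _
    unfold xpt
    rw [if_neg]
    rintro ⟨h1, -⟩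
    exact hk h1

lemma rowNZ_of_entry (hT : IsTeslerTableau n a T) {i k : Fin n} (hik : i < k)
    (h : T i k = 1) : rowNZ T k := by
  obtain ⟨k', -, hk'⟩ := hT.2.2.2.1 i k hik h
  exact ⟨k', hk'⟩

lemma a_eq_zero_of_not_rowNZ (hT : IsTeslerTableau n a T) {k : Fin n} (hk : ¬ rowNZ T k) :
    a k = 0 := by
  by_contra hc
  obtain ⟨j, -, hj⟩ := hT.2.2.1 k (Nat.pos_of_ne_zero hc)
  exact hk ⟨j, hj⟩

lemma mass_zero_of_not_rowNZ (hT : IsTeslerTableau n a T) (hσ : validC T σ) {k : Fin n}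
    (hk : ¬ rowNZ T k) : mass a T σ k = 0 := by
  rw [mass_eq, a_eq_zero_of_not_rowNZ hT hk]
  simp only [Nat.cast_zero, zero_add]
  apply Finset.sum_eq_zero
  intro i' hi'
  simp only [mem_filter, mem_univ, true_and] at hi'
  unfold xpt
  rw [if_neg]
  rintro ⟨h1, h2⟩
  have hT1 : T i' k = 1 := by rw [← h2]; exact hσ i' h1
  exact hk (rowNZ_of_entry hT hi' hT1)

lemma xpt_mem (hT : IsTeslerTableau n a T) (hσ : validC T σ) :
    xpt a T σ ∈ TeslerPolytope n a := by
  rw [mem_tesler]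
  refine ⟨?_, fun i j _ => xpt_nonneg a T σ i j, ?_⟩
  · intro i j hji
    apply xpt_supp hσ
    exact hT.1 i j (not_le_of_gt hji)
  · intro k
    unfold hsum
    rw [rowsum_xpt hT hσ]
    have hcol : ∑ i ∈ univ.filter (fun i => i < k), xpt a T σ i k = mass a T σ k - a k := by
      rw [mass_eq a T σ k]; ring
    rw [hcol]
    by_cases hk : rowNZ T k
    · rw [if_pos hk]; ring
    · rw [if_neg hk, mass_zero_of_not_rowNZ hT hσ hk, a_eq_zero_of_not_rowNZ hT hk]
      norm_num

lemma mass_congr {σ' : Fin n → Fin n} (i : Fin n)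
    (h : ∀ i', i' < i → σ i' = σ' i') : mass a T σ i = mass a T σ' i := by
  induction i using fin_strong with
  | h i ih =>
    rw [mass_eq, mass_eq]
    congr 1
    apply Finset.sum_congr rfl
    intro i' hi'
    simp only [mem_filter, mem_univ, true_and] at hi'
    unfold xpt
    rw [h i' hi']
    split
    · exact ih i' hi' (fun i'' hi'' => h i'' (hi''.trans hi'))
    · rfl

noncomputable def sigma0 (T : Fin n → Fin n → ℕ) : Fin n → Fin n :=
  fun i => if h : rowNZ T i then h.choose else i

lemma sigma0_valid (T : Fin n → Fin n → ℕ) : validC T (sigma0 T) := by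
  intro i h
  unfold sigma0
  rw [dif_pos h]
  exact h.choose_spec

lemma chain (hT : IsTeslerTableau n a T) (p : Fin n) (hp : rowNZ T p) :
    ∃ σ : Fin n → Fin n, validC T σ ∧ 0 < mass a T σ p := by
  revert hp
  induction p using fin_strong with
  | h p ih =>
    intro hp
    by_cases ha : 0 < a p
    · refine ⟨sigma0 T, sigma0_valid T, ?_⟩
      rw [mass_eq]
      have h1 : (0:ℝ) < (a p : ℝ) := by exact_mod_cast ha
      have h2 : 0 ≤ ∑ i' ∈ univ.filter (fun i' => i' < p), xpt a T (sigma0 T) i' p :=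
        Finset.sum_nonneg (fun i' _ => xpt_nonneg a T (sigma0 T) i' p)
      linarith
    · have hap : a p = 0 := by omega
      have hex : ∃ i, i < p ∧ T i p = 1 := by
        by_contra hc
        push_neg at hc
        have hcol : ∀ i, i < p → T i p = 0 := by
          intro i hi
          have := hT.2.1 i p
          have := hc i hi
          omega
        obtain ⟨j, hj⟩ := hp
        have hjp : p ≤ j := by
          by_contra hle
          have := hT.1 p j hle
          omega
        have := hT.2.2.2.2 p hap hcol j hjp
        omega
      obtain ⟨i, hip, hTip⟩ := hex
      obtain ⟨σ, hσ, hm⟩ := ih i hip ⟨p, hTip⟩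
      refine ⟨Function.update σ i p, ?_, ?_⟩
      · intro i'' h''
        by_cases he : i'' = i
        · subst he; rw [Function.update_self]; exact hTip
        · rw [Function.update_of_ne he]; exact hσ i'' h''
      · rw [mass_eq]
        have hmem : i ∈ univ.filter (fun i' => i' < p) := by
          simp only [mem_filter, mem_univ, true_and]; exact hip
        have hterm : xpt a T (Function.update σ i p) i p = mass a T (Function.update σ i p) i := by
          unfold xpt
          rw [if_pos ⟨⟨p, hTip⟩, Function.update_self i p σ⟩]
        have hcongr : mass a T (Function.update σ i p) i = mass a T σ i := by
          apply mass_congr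
          intro i' hi'
          rw [Function.update_of_ne (ne_of_lt hi')]
        have hle : xpt a T (Function.update σ i p) i p
            ≤ ∑ i' ∈ univ.filter (fun i' => i' < p), xpt a T (Function.update σ i p) i' p :=
          Finset.single_le_sum (fun i' _ => xpt_nonneg a T _ i' p) hmem
        have : (0:ℝ) ≤ (a p : ℝ) := Nat.cast_nonneg _
        rw [hterm, hcongr] at hle
        linarith

lemma point_at (hT : IsTeslerTableau n a T) {p q : Fin n} (hpq : T p q = 1) :
    ∃ x, x ∈ TeslerPolytope n a ∧ (∀ i j, T i j = 0 → x i j = 0) ∧ 0 < x p q := by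
  obtain ⟨σ, hσ, hm⟩ := chain hT p ⟨q, hpq⟩
  set σ' := Function.update σ p q with hσ'def
  have hσ' : validC T σ' := by
    intro i'' h''
    by_cases he : i'' = p
    · subst he; rw [hσ'def, Function.update_self]; exact hpq
    · rw [hσ'def, Function.update_of_ne he]; exact hσ i'' h''
  refine ⟨xpt a T σ', xpt_mem hT hσ', fun i j h => xpt_supp hσ' h, ?_⟩
  have : xpt a T σ' p q = mass a T σ' p := by
    unfold xpt
    rw [if_pos ⟨⟨q, hpq⟩, Function.update_self p q σ⟩]
  rw [this]
  have : mass a T σ' p = mass a T σ p := by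
    apply mass_congr
    intro i' hi'
    rw [hσ'def, Function.update_of_ne (ne_of_lt hi')]
  rw [this]
  exact hm


variable {n : ℕ} {a : Fin n → ℕ} {F : Set (Fin n → Fin n → ℝ)}

lemma supp0_iff {i j : Fin n} : suppTab n F i j = 0 ↔ ∀ x ∈ F, x i j = 0 := by
  unfold suppTab
  split <;> simp_all

lemma supp_le_one (i j : Fin n) : suppTab n F i j ≤ 1 := by
  unfold suppTab; split <;> omega

lemma supp1_iff {i j : Fin n} : suppTab n F i j = 1 ↔ ∃ x ∈ F, x i j ≠ 0 := by
  unfold suppTab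
  split <;> rename_i h
  · constructor
    · intro h01; omega
    · rintro ⟨x, hx, hne⟩; exact absurd (h x hx) hne
  · push_neg at h
    simpa using h

lemma rowsum_eq {x : Fin n → Fin n → ℝ} (hx : x ∈ TeslerPolytope n a) (k : Fin n) :
    ∑ j ∈ univ.filter (fun j => k ≤ j), x k j
      = (a k : ℝ) + ∑ i ∈ univ.filter (fun i => i < k), x i k := by
  have := (mem_tesler.mp hx).2.2 k
  unfold hsum at this
  linarith

lemma part1 (hF : F.Nonempty) (hFP : F ⊆ TeslerPolytope n a) :
    IsTeslerTableau n a (suppTab n F) := by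
  refine ⟨?_, fun i j => supp_le_one i j, ?_, ?_, ?_⟩
  · intro i j hij
    rw [supp0_iff]
    intro x hx
    exact (mem_tesler.mp (hFP hx)).1 i j (lt_of_not_ge hij)
  · -- rows with a i > 0 are nonzero
    intro i hai
    by_contra hc
    push_neg at hc
    obtain ⟨x, hx⟩ := hF
    have hxP := hFP hx
    have hzero : ∀ j ∈ univ.filter (fun j => i ≤ j), x i j = 0 := by
      intro j hj
      simp only [mem_filter, mem_univ, true_and] at hj
      have h1 := hc j hj
      have h2 := supp_le_one (F := F) i j
      have h0 : suppTab n F i j = 0 := by omega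
      exact supp0_iff.mp h0 x hx
    have hrow : ∑ j ∈ univ.filter (fun j => i ≤ j), x i j = 0 := Finset.sum_eq_zero hzero
    have hcol : 0 ≤ ∑ i' ∈ univ.filter (fun i' => i' < i), x i' i :=
      Finset.sum_nonneg fun i' hi' => (mem_tesler.mp hxP).2.1 i' i
        (le_of_lt (by simpa using hi'))
    have := rowsum_eq hxP i
    have hai' : (0:ℝ) < (a i : ℝ) := by exact_mod_cast hai
    linarith
  · -- 1 above implies nonzero row below
    intro i j hij h1
    obtain ⟨x, hx, hxne⟩ := supp1_iff.mp h1
    have hxP := hFP hx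
    have hxpos : 0 < x i j := lt_of_le_of_ne ((mem_tesler.mp hxP).2.1 i j (le_of_lt hij)) (Ne.symm hxne)
    have hmem : i ∈ univ.filter (fun i' => i' < j) := by simp [hij]
    have hcol : x i j ≤ ∑ i' ∈ univ.filter (fun i' => i' < j), x i' j :=
      Finset.single_le_sum (fun i' hi' => (mem_tesler.mp hxP).2.1 i' j
        (le_of_lt (by simpa using hi'))) hmem
    have hrow := rowsum_eq hxP j
    by_contra hc
    push_neg at hc
    have hzero : ∀ k ∈ univ.filter (fun k => j ≤ k), x j k = 0 := by
      intro k hk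
      simp only [mem_filter, mem_univ, true_and] at hk
      have h1' := hc k hk
      have h2 := supp_le_one (F := F) j k
      have h0 : suppTab n F j k = 0 := by omega
      exact supp0_iff.mp h0 x hx
    have : ∑ k ∈ univ.filter (fun k => j ≤ k), x j k = 0 := Finset.sum_eq_zero hzero
    have hanneg : (0:ℝ) ≤ (a j : ℝ) := Nat.cast_nonneg _
    linarith
  · -- zero column and a j = 0 forces zero row
    intro j haj hcol k hjk
    rw [supp0_iff]
    intro x hx
    have hxP := hFP hx
    have hcolz : ∑ i' ∈ univ.filter (fun i' => i' < j), x i' j = 0 := by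
      apply Finset.sum_eq_zero
      intro i' hi'
      simp only [mem_filter, mem_univ, true_and] at hi'
      exact supp0_iff.mp (hcol i' hi') x hx
    have hrow := rowsum_eq hxP j
    rw [haj, hcolz] at hrow
    simp only [Nat.cast_zero, zero_add, add_zero] at hrow
    have hall := (Finset.sum_eq_zero_iff_of_nonneg (fun k' hk' =>
      (mem_tesler.mp hxP).2.1 j k' (by simpa using hk'))).mp hrow
    exact hall k (by simp [hjk])

lemma convex_tesler : Convex ℝ (TeslerPolytope n a) := by
  intro x hx y hy α β hα hβ hαβ
  have heq : (α • x + β • y) = fun i j => α * x i j + β * y i j := by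
    funext i j
    simp [Pi.add_apply, Pi.smul_apply, smul_eq_mul]
  rw [mem_tesler] at hx hy ⊢
  rw [heq]
  refine ⟨?_, ?_, ?_⟩
  · intro i j hji
    show α * x i j + β * y i j = 0
    rw [hx.1 i j hji, hy.1 i j hji]; ring
  · intro i j hij
    show 0 ≤ α * x i j + β * y i j
    have := hx.2.1 i j hij
    have := hy.2.1 i j hij
    positivity
  · intro k
    rw [hsum_comb, hx.2.2 k, hy.2.2 k, ← add_mul, hαβ, one_mul]

lemma exists_full (hF : F.Nonempty) (hconv : Convex ℝ F) (hFP : F ⊆ TeslerPolytope n a) :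
    ∃ z ∈ F, ∀ i j, suppTab n F i j = 1 → 0 < z i j := by
  classical
  set S := univ.filter (fun p : Fin n × Fin n => suppTab n F p.1 p.2 = 1) with hS
  have h1 : ∀ p : Fin n × Fin n, ∃ x, x ∈ F ∧ (suppTab n F p.1 p.2 = 1 → x p.1 p.2 ≠ 0) := by
    intro p
    by_cases h : suppTab n F p.1 p.2 = 1
    · obtain ⟨x, hx, hne⟩ := supp1_iff.mp h
      exact ⟨x, hx, fun _ => hne⟩
    · exact ⟨hF.choose, hF.choose_spec, fun hh => absurd hh h⟩
  choose w hwF hwne using h1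
  by_cases hSne : S.Nonempty
  · refine ⟨S.centerMass (fun _ => (1:ℝ)) w, ?_, ?_⟩
    · apply hconv.centerMass_mem (fun _ _ => zero_le_one)
      · rw [Finset.sum_const]
        simp only [nsmul_eq_mul, mul_one]
        exact_mod_cast Finset.card_pos.mpr hSne
      · intro p _; exact hwF p
    · intro i j hij
      have hmem : (i, j) ∈ S := by simp [hS, hij]
      have hij_le : i ≤ j := by
        by_contra hc
        obtain ⟨x, hx, hne⟩ := supp1_iff.mp hij
        exact hne ((mem_tesler.mp (hFP hx)).1 i j (lt_of_not_ge hc))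
      have happ : S.centerMass (fun _ => (1:ℝ)) w i j
          = ((S.card : ℝ))⁻¹ * ∑ p ∈ S, w p i j := by
        unfold Finset.centerMass
        simp [Finset.sum_apply, smul_eq_mul]
      rw [happ]
      apply mul_pos
      · rw [inv_pos]; exact_mod_cast Finset.card_pos.mpr hSne
      · apply Finset.sum_pos'
        · intro p _
          exact (mem_tesler.mp (hFP (hwF p))).2.1 i j hij_le
        · refine ⟨(i, j), hmem, ?_⟩
          have := hwne (i, j) hij
          have hnn := (mem_tesler.mp (hFP (hwF (i, j)))).2.1 i j hij_le
          exact lt_of_le_of_ne hnn (Ne.symm this)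
  · obtain ⟨x, hx⟩ := hF
    refine ⟨x, hx, ?_⟩
    intro i j hij
    exact absurd (by simp [hS, hij] : (i,j) ∈ S) (fun h => hSne ⟨_, h⟩)

lemma exists_eps {ι : Type*} (S : Finset ι) (u v : ι → ℝ) (hu : ∀ p ∈ S, 0 < u p) :
    ∃ ε : ℝ, 0 < ε ∧ ∀ p ∈ S, ε * |v p| ≤ u p := by
  by_cases hS : S.Nonempty
  · refine ⟨min 1 (S.inf' hS (fun p => u p / (|v p| + 1))), ?_, ?_⟩
    · apply lt_min one_pos
      rw [Finset.lt_inf'_iff]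
      intro p hp
      have := hu p hp
      positivity
    · intro p hp
      have h1 : min 1 (S.inf' hS (fun p => u p / (|v p| + 1))) ≤ u p / (|v p| + 1) :=
        (min_le_right _ _).trans (Finset.inf'_le _ hp)
      have habs : (0:ℝ) ≤ |v p| := abs_nonneg _
      have hup := hu p hp
      calc min 1 (S.inf' hS (fun p => u p / (|v p| + 1))) * |v p|
          ≤ (u p / (|v p| + 1)) * |v p| := mul_le_mul_of_nonneg_right h1 habs
        _ ≤ u p := by
            rw [div_mul_eq_mul_div, div_le_iff₀ (by positivity)]
            nlinarith
  · refine ⟨1, one_pos, fun p hp => absurd hp ?_⟩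
    rw [Finset.not_nonempty_iff_eq_empty] at hS
    simp [hS]

lemma face_eq (hF : F.Nonempty) (hexp : IsExposed ℝ (TeslerPolytope n a) F) :
    F = {x ∈ TeslerPolytope n a | ∀ i j, suppTab n F i j = 0 → x i j = 0} := by
  obtain ⟨l, hl⟩ := hexp hF
  apply Set.Subset.antisymm
  · intro x hx
    exact ⟨hexp.subset hx, fun i j h => supp0_iff.mp h x hx⟩
  · rintro y ⟨hyP, hy0⟩
    obtain ⟨z, hzF, hzpos⟩ := exists_full hF (hexp.convex convex_tesler) hexp.subset
    set S := univ.filter (fun p : Fin n × Fin n => suppTab n F p.1 p.2 = 1) with hSdef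
    obtain ⟨ε, hε, hεle⟩ := exists_eps S (fun p => z p.1 p.2)
      (fun p => z p.1 p.2 - y p.1 p.2)
      (fun p hp => hzpos _ _ (by simpa [hSdef] using hp))
    set w : Fin n → Fin n → ℝ := fun i j => z i j + ε * (z i j - y i j) with hwdef
    have hzP : z ∈ TeslerPolytope n a := hexp.subset hzF
    have hwP : w ∈ TeslerPolytope n a := by
      rw [mem_tesler]
      refine ⟨?_, ?_, ?_⟩
      · intro i j hji
        have h1 := (mem_tesler.mp hzP).1 i j hji
        have h2 := (mem_tesler.mp hyP).1 i j hji
        simp [hwdef, h1, h2]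
      · intro i j hij
        by_cases hsp : suppTab n F i j = 1
        · have hle := hεle (i, j) (by simp [hSdef, hsp])
          simp only at hle
          have h2 : -(|z i j - y i j|) ≤ z i j - y i j := neg_abs_le _
          have h3 : z i j - y i j ≤ |z i j - y i j| := le_abs_self _
          simp only [hwdef]
          nlinarith
        · have h0 : suppTab n F i j = 0 := by
            have := supp_le_one (F := F) i j; omega
          have h1 : z i j = 0 := supp0_iff.mp h0 z hzF
          have h2 : y i j = 0 := hy0 i j h0
          simp [hwdef, h1, h2]
      · intro k
        have heq : w = fun i j => (1 + ε) * z i j + (-ε) * y i j := by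
          funext i j; simp only [hwdef]; ring
        rw [heq, hsum_comb, (mem_tesler.mp hzP).2.2 k, (mem_tesler.mp hyP).2.2 k]
        ring
    have hzF' := hzF
    rw [hl] at hzF'
    obtain ⟨hzP', hzmax⟩ := hzF'
    have hwle : l w ≤ l z := hzmax w hwP
    have hyle : l y ≤ l z := hzmax y hyP
    have hlw : l w = l z + ε * (l z - l y) := by
      have hweq : w = z + ε • (z - y) := by
        funext i j
        simp [hwdef, Pi.add_apply, Pi.smul_apply, Pi.sub_apply, smul_eq_mul]
      rw [hweq, map_add, map_smul, map_sub, smul_eq_mul]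
    have hzy : l z ≤ l y := by nlinarith
    have hzy' : l z = l y := le_antisymm hzy hyle
    rw [hl]
    exact ⟨hyP, fun u hu => (hzmax u hu).trans (le_of_eq hzy')⟩

end TeslerAux

namespace TeslerAux

variable {n : ℕ} {a : Fin n → ℕ} {T : Fin n → Fin n → ℕ} {F : Set (Fin n → Fin n → ℝ)}

def faceOf (a : Fin n → ℕ) (T : Fin n → Fin n → ℕ) : Set (Fin n → Fin n → ℝ) :=
  {x ∈ TeslerPolytope n a | ∀ i j, T i j = 0 → x i j = 0}

lemma faceOf_nonempty (hT : IsTeslerTableau n a T) : (faceOf a T).Nonempty :=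
  ⟨xpt a T (sigma0 T), xpt_mem hT (sigma0_valid T),
    fun _ _ h => xpt_supp (sigma0_valid T) h⟩

noncomputable def lfun (T : Fin n → Fin n → ℕ) : (Fin n → Fin n → ℝ) →L[ℝ] ℝ :=
  LinearMap.toContinuousLinearMap
    { toFun := fun x => -∑ i : Fin n, ∑ j : Fin n,
        (if T i j = 0 ∧ i ≤ j then (1:ℝ) else 0) * x i j
      map_add' := by
        intro x y
        simp only [Pi.add_apply, mul_add, Finset.sum_add_distrib]
        ring
      map_smul' := by
        intro r x
        simp only [Pi.smul_apply, smul_eq_mul, RingHom.id_apply]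
        rw [mul_neg, neg_inj, Finset.mul_sum]
        apply Finset.sum_congr rfl
        intro i _
        rw [Finset.mul_sum]
        apply Finset.sum_congr rfl
        intro j _
        ring }

lemma lfun_apply (T : Fin n → Fin n → ℕ) (x : Fin n → Fin n → ℝ) :
    lfun T x = -∑ i : Fin n, ∑ j : Fin n,
      (if T i j = 0 ∧ i ≤ j then (1:ℝ) else 0) * x i j := rfl

lemma lfun_nonpos {x : Fin n → Fin n → ℝ} (hx : x ∈ TeslerPolytope n a) :
    lfun T x ≤ 0 := by
  rw [lfun_apply, neg_nonpos]
  apply Finset.sum_nonneg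
  intro i _
  apply Finset.sum_nonneg
  intro j _
  split <;> rename_i h
  · rw [one_mul]; exact (mem_tesler.mp hx).2.1 i j h.2
  · rw [zero_mul]

lemma lfun_zero_iff {x : Fin n → Fin n → ℝ} (hx : x ∈ TeslerPolytope n a) :
    lfun T x = 0 ↔ ∀ i j, T i j = 0 → x i j = 0 := by
  rw [lfun_apply, neg_eq_zero]
  have hnn : ∀ i ∈ (univ : Finset (Fin n)), (0:ℝ) ≤ ∑ j : Fin n,
      (if T i j = 0 ∧ i ≤ j then (1:ℝ) else 0) * x i j := by
    intro i _
    apply Finset.sum_nonneg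
    intro j _
    split <;> rename_i h
    · rw [one_mul]; exact (mem_tesler.mp hx).2.1 i j h.2
    · rw [zero_mul]
  have hnn2 : ∀ i : Fin n, ∀ j ∈ (univ : Finset (Fin n)),
      (0:ℝ) ≤ (if T i j = 0 ∧ i ≤ j then (1:ℝ) else 0) * x i j := by
    intro i j _
    split <;> rename_i h
    · rw [one_mul]; exact (mem_tesler.mp hx).2.1 i j h.2
    · rw [zero_mul]
  constructor
  · intro h0 i j hTij
    by_cases hij : i ≤ j
    · have h1 := (Finset.sum_eq_zero_iff_of_nonneg hnn).mp h0 i (mem_univ i)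
      have h2 := (Finset.sum_eq_zero_iff_of_nonneg (hnn2 i)).mp h1 j (mem_univ j)
      rw [if_pos ⟨hTij, hij⟩, one_mul] at h2
      exact h2
    · exact (mem_tesler.mp hx).1 i j (lt_of_not_ge hij)
  · intro h
    apply Finset.sum_eq_zero
    intro i _
    apply Finset.sum_eq_zero
    intro j _
    split <;> rename_i hc
    · rw [one_mul]; exact h i j hc.1
    · rw [zero_mul]

lemma faceOf_exposed : IsExposed ℝ (TeslerPolytope n a) (faceOf a T) := by
  intro hne
  refine ⟨lfun T, ?_⟩
  obtain ⟨x0, hx0P, hx0z⟩ := hne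
  have hx00 : lfun T x0 = 0 := (lfun_zero_iff hx0P).mpr hx0z
  ext x
  constructor
  · rintro ⟨hxP, hxz⟩
    refine ⟨hxP, fun y hy => ?_⟩
    rw [(lfun_zero_iff hxP).mpr hxz]
    exact lfun_nonpos hy
  · rintro ⟨hxP, hmax⟩
    refine ⟨hxP, ?_⟩
    have h1 : lfun T x0 ≤ lfun T x := hmax x0 hx0P
    have h2 : lfun T x ≤ 0 := lfun_nonpos hxP
    rw [hx00] at h1
    exact (lfun_zero_iff hxP).mp (le_antisymm h2 h1)

lemma suppTab_faceOf (hT : IsTeslerTableau n a T) : suppTab n (faceOf a T) = T := by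
  funext i j
  by_cases h0 : T i j = 0
  · rw [h0]
    exact supp0_iff.mpr (fun x hx => hx.2 i j h0)
  · have h1 : T i j = 1 := by have := hT.2.1 i j; omega
    rw [h1]
    obtain ⟨x, hxP, hxz, hxpos⟩ := point_at hT h1
    exact supp1_iff.mpr ⟨x, ⟨hxP, hxz⟩, ne_of_gt hxpos⟩

end TeslerAux

namespace TeslerAux

variable {n : ℕ} {a : Fin n → ℕ} {T : Fin n → Fin n → ℕ} {σ : Fin n → Fin n}

lemma hsum_add (x y : Fin n → Fin n → ℝ) (k : Fin n) :
    hsum (x + y) k = hsum x k + hsum y k := by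
  have h : (x + y) = fun i j => 1 * x i j + 1 * y i j := by funext i j; simp
  rw [h, hsum_comb]; ring

lemma hsum_smul (c : ℝ) (x : Fin n → Fin n → ℝ) (k : Fin n) :
    hsum (c • x) k = c * hsum x k := by
  have h : (c • x) = fun i j => c * x i j + 0 * x i j := by funext i j; simp
  rw [h, hsum_comb]; ring

def Wsp (T : Fin n → Fin n → ℕ) : Submodule ℝ (Fin n → Fin n → ℝ) where
  carrier := {v | (∀ i j, T i j = 0 → v i j = 0) ∧ ∀ k, hsum v k = 0}
  add_mem' := by
    rintro x y ⟨hx1, hx2⟩ ⟨hy1, hy2⟩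
    constructor
    · intro i j h
      show x i j + y i j = 0
      rw [hx1 i j h, hy1 i j h]; ring
    · intro k
      rw [hsum_add, hx2 k, hy2 k]; ring
  zero_mem' := by
    constructor
    · intro i j _; rfl
    · intro k
      show (∑ j ∈ univ.filter (fun j => k ≤ j), (0:ℝ)) - ∑ i ∈ univ.filter (fun i => i < k), (0:ℝ) = 0
      simp
  smul_mem' := by
    rintro c x ⟨hx1, hx2⟩
    constructor
    · intro i j h
      show c * x i j = 0
      rw [hx1 i j h]; ring
    · intro k
      rw [hsum_smul, hx2 k]; ring

lemma mem_Wsp {v : Fin n → Fin n → ℝ} :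
    v ∈ Wsp T ↔ (∀ i j, T i j = 0 → v i j = 0) ∧ ∀ k, hsum v k = 0 := Iff.rfl

noncomputable def comprow (T : Fin n → Fin n → ℕ) (σ : Fin n → Fin n)
    (g : Fin n → Fin n → ℝ) : Fin n → Fin n → ℝ
  | i => fun j =>
      if T i j = 1 then
        if j = σ i then
          (∑ p ∈ (univ.filter (fun i' : Fin n => i' < i)).attach, comprow T σ g p.1 i)
            - ∑ j' ∈ univ.filter (fun j' => T i j' = 1 ∧ j' ≠ σ i), g i j'
        else g i j
      else 0
  termination_by i => i.1
  decreasing_by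
    · have hp := p.2
      simp only [mem_filter, mem_univ, true_and] at hp
      exact hp

lemma comprow_of_ne (g : Fin n → Fin n → ℝ) {i j : Fin n} (h : T i j ≠ 1) :
    comprow T σ g i j = 0 := by
  rw [comprow]
  simp [h]

lemma comprow_free (g : Fin n → Fin n → ℝ) {i j : Fin n} (h1 : T i j = 1) (h2 : j ≠ σ i) :
    comprow T σ g i j = g i j := by
  rw [comprow]
  simp [h1, h2]

lemma comprow_sig (g : Fin n → Fin n → ℝ) {i : Fin n} (h1 : T i (σ i) = 1) :
    comprow T σ g i (σ i)
      = (∑ i' ∈ univ.filter (fun i' => i' < i), comprow T σ g i' i)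
        - ∑ j' ∈ univ.filter (fun j' => T i j' = 1 ∧ j' ≠ σ i), g i j' := by
  rw [comprow]
  simp only [h1, if_true, if_pos rfl]
  congr 1
  rw [← Finset.sum_attach (univ.filter (fun i' => i' < i)) (fun i' => comprow T σ g i' i)]

lemma comprow_mem (hT : IsTeslerTableau n a T) (hσ : validC T σ) (g : Fin n → Fin n → ℝ) :
    comprow T σ g ∈ Wsp T := by
  constructor
  · intro i j h
    exact comprow_of_ne g (by omega)
  · intro k
    unfold hsum
    have hrowsub : ∑ j ∈ univ.filter (fun j => k ≤ j), comprow T σ g k j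
        = ∑ j ∈ univ.filter (fun j => T k j = 1), comprow T σ g k j := by
      symm
      apply Finset.sum_subset
      · intro j hj
        simp only [mem_filter, mem_univ, true_and] at hj ⊢
        by_contra hc
        have := hT.1 k j hc
        omega
      · intro j _ hj
        simp only [mem_filter, mem_univ, true_and] at hj
        exact comprow_of_ne g hj
    rw [hrowsub]
    by_cases hk : rowNZ T k
    · have hσk : T k (σ k) = 1 := hσ k hk
      have hmem : σ k ∈ univ.filter (fun j => T k j = 1) := by simp [hσk]
      rw [← Finset.add_sum_erase _ _ hmem]
      have herase : (univ.filter (fun j => T k j = 1)).erase (σ k)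
          = univ.filter (fun j' => T k j' = 1 ∧ j' ≠ σ k) := by
        ext j'
        simp only [mem_erase, mem_filter, mem_univ, true_and]
        tauto
      have hfree : ∑ j' ∈ (univ.filter (fun j => T k j = 1)).erase (σ k), comprow T σ g k j'
          = ∑ j' ∈ univ.filter (fun j' => T k j' = 1 ∧ j' ≠ σ k), g k j' := by
        rw [herase]
        apply Finset.sum_congr rfl
        intro j' hj'
        simp only [mem_filter, mem_univ, true_and] at hj'
        exact comprow_free g hj'.1 hj'.2
      rw [hfree, comprow_sig g hσk]
      ring
    · have hempty : univ.filter (fun j => T k j = 1) = ∅ := by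
        apply Finset.filter_eq_empty_iff.mpr
        intro j _
        intro hj
        exact hk ⟨j, hj⟩
      rw [hempty, Finset.sum_empty]
      have hcol : ∑ i ∈ univ.filter (fun i => i < k), comprow T σ g i k = 0 := by
        apply Finset.sum_eq_zero
        intro i' hi'
        simp only [mem_filter, mem_univ, true_and] at hi'
        apply comprow_of_ne g
        intro hT1
        exact hk (rowNZ_of_entry hT hi' hT1)
      rw [hcol]
      ring

lemma W_inj {v : Fin n → Fin n → ℝ} (hT : IsTeslerTableau n a T) (hσ : validC T σ)
    (hv : v ∈ Wsp T) (hz : ∀ i j, T i j = 1 → j ≠ σ i → v i j = 0) : v = 0 := by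
  have hrows : ∀ i : Fin n, ∀ j, v i j = 0 := by
    intro i
    induction i using fin_strong with
    | h i ih =>
      have hrow0 : ∀ j, j ≠ σ i → v i j = 0 := by
        intro j hj
        by_cases h1 : T i j = 1
        · exact hz i j h1 hj
        · exact hv.1 i j (by have := hT.2.1 i j; omega)
      intro j
      by_cases hj : j = σ i
      · subst hj
        by_cases hT1 : T i (σ i) = 1
        · have hrnz : rowNZ T i := ⟨σ i, hT1⟩
          have hhs := hv.2 i
          unfold hsum at hhs
          have hcol : ∑ i' ∈ univ.filter (fun i' => i' < i), v i' i = 0 := by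
            apply Finset.sum_eq_zero
            intro i' hi'
            simp only [mem_filter, mem_univ, true_and] at hi'
            exact ih i' hi' i
          have hmem : σ i ∈ univ.filter (fun j => i ≤ j) := by
            simp only [mem_filter, mem_univ, true_and]
            exact le_sigma hT hσ hrnz
          have hrow : ∑ j' ∈ univ.filter (fun j => i ≤ j), v i j' = v i (σ i) := by
            apply Finset.sum_eq_single_of_mem (σ i) hmem
            intro b _ hb
            exact hrow0 b hb
          rw [hrow, hcol] at hhs
          linarith
        · exact hv.1 i (σ i) (by have := hT.2.1 i (σ i); omega)
      · exact hrow0 j hj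
  funext i j
  exact hrows i j

end TeslerAux

namespace TeslerAux

variable {n : ℕ} {a : Fin n → ℕ} {T : Fin n → Fin n → ℕ} {F : Set (Fin n → Fin n → ℝ)}

lemma finrank_Wsp (hT : IsTeslerTableau n a T) :
    Module.finrank ℝ (Wsp T) = tabDim n T := by
  classical
  set σ := sigma0 T with hσdef
  have hσv : validC T σ := sigma0_valid T
  let Fr := {p : Fin n × Fin n // T p.1 p.2 = 1 ∧ p.2 ≠ σ p.1}
  let Φ : Wsp T →ₗ[ℝ] (Fr → ℝ) :=
    { toFun := fun v p => (v : Fin n → Fin n → ℝ) p.1.1 p.1.2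
      map_add' := fun v w => by funext p; simp
      map_smul' := fun c v => by funext p; simp }
  have hinj : Function.Injective Φ := by
    intro v w hvw
    have hsub : ((v - w : Wsp T) : Fin n → Fin n → ℝ) = 0 := by
      apply W_inj hT hσv (v - w).2
      intro i j h1 h2
      have := congrFun hvw (⟨(i, j), ⟨h1, h2⟩⟩ : Fr)
      simp only [Φ, LinearMap.coe_mk, AddHom.coe_mk] at this
      show ((v : Fin n → Fin n → ℝ) - (w : Fin n → Fin n → ℝ)) i j = 0
      simp only [Pi.sub_apply]
      rw [this]; ring
    apply Subtype.ext
    have : (v : Fin n → Fin n → ℝ) - (w : Fin n → Fin n → ℝ) = 0 := by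
      rw [← Submodule.coe_sub]; exact hsub
    exact sub_eq_zero.mp this
  have hsurj : Function.Surjective Φ := by
    intro f
    set g : Fin n → Fin n → ℝ :=
      fun i j => if h : T i j = 1 ∧ j ≠ σ i then f ⟨(i, j), h⟩ else 0 with hgdef
    refine ⟨⟨comprow T σ g, comprow_mem hT hσv g⟩, ?_⟩
    funext p
    obtain ⟨⟨i, j⟩, h1, h2⟩ := p
    show comprow T σ g i j = f ⟨(i, j), ⟨h1, h2⟩⟩
    rw [comprow_free g h1 h2]
    exact dif_pos ⟨h1, h2⟩
  have e : Wsp T ≃ₗ[ℝ] (Fr → ℝ) := LinearEquiv.ofBijective Φ ⟨hinj, hsurj⟩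
  rw [e.finrank_eq, Module.finrank_pi]
  have e2 : Fr ≃ Σ i : Fin n, {j // T i j = 1 ∧ j ≠ σ i} :=
    Equiv.subtypeProdEquivSigmaSubtype (fun (i j : Fin n) => T i j = 1 ∧ j ≠ σ i)
  rw [Fintype.card_congr e2, Fintype.card_sigma]
  unfold tabDim
  apply Finset.sum_congr rfl
  intro i _
  rw [Fintype.card_subtype]
  by_cases hi : rowNZ T i
  · have hσi : T i (σ i) = 1 := hσv i hi
    have heq : univ.filter (fun j => T i j = 1 ∧ j ≠ σ i)
        = (univ.filter (fun j => T i j = 1)).erase (σ i) := by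
      ext j
      simp only [mem_erase, mem_filter, mem_univ, true_and]
      tauto
    rw [heq, Finset.card_erase_of_mem (by simp [hσi])]
  · have hall : ∀ j, T i j ≠ 1 := fun j h => hi ⟨j, h⟩
    rw [Finset.filter_eq_empty_iff.mpr (fun j _ => by simp [hall j]),
      Finset.filter_eq_empty_iff.mpr (fun j _ => hall j)]
    simp

lemma vspan_eq (hF : F.Nonempty) (hexp : IsExposed ℝ (TeslerPolytope n a) F) :
    vectorSpan ℝ F = Wsp (suppTab n F) := by
  apply le_antisymm
  · rw [vectorSpan_def]
    apply Submodule.span_le.mpr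
    rintro v ⟨x, hx, y, hy, rfl⟩
    have hxP := hexp.subset hx
    have hyP := hexp.subset hy
    constructor
    · intro i j h
      show x i j - y i j = 0
      rw [supp0_iff.mp h x hx, supp0_iff.mp h y hy]; ring
    · intro k
      show hsum (x -ᵥ y) k = 0
      have hxy : (x -ᵥ y) = x + (-1:ℝ) • y := by
        funext i j; simp [Pi.sub_apply]; ring
      rw [hxy, hsum_add, hsum_smul, (mem_tesler.mp hxP).2.2 k, (mem_tesler.mp hyP).2.2 k]
      ring
  · intro v hv
    obtain ⟨z, hzF, hzpos⟩ := exists_full hF (hexp.convex convex_tesler) hexp.subset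
    set S := univ.filter (fun p : Fin n × Fin n => suppTab n F p.1 p.2 = 1) with hSdef
    obtain ⟨ε, hε, hεle⟩ := exists_eps S (fun p => z p.1 p.2) (fun p => v p.1 p.2)
      (fun p hp => hzpos _ _ (by simpa [hSdef] using hp))
    have hzP := hexp.subset hzF
    set w : Fin n → Fin n → ℝ := z + ε • v with hwdef
    have hwapp : ∀ i j, w i j = z i j + ε * v i j := by
      intro i j; simp [hwdef]
    have hsupp : ∀ i j, suppTab n F i j = 0 → w i j = 0 := by
      intro i j h
      rw [hwapp, supp0_iff.mp h z hzF, hv.1 i j h]; ring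
    have hwP : w ∈ TeslerPolytope n a := by
      rw [mem_tesler]
      refine ⟨?_, ?_, ?_⟩
      · intro i j hji
        apply hsupp
        exact supp0_iff.mpr (fun x hx => (mem_tesler.mp (hexp.subset hx)).1 i j hji)
      · intro i j hij
        by_cases hsp : suppTab n F i j = 1
        · have hle := hεle (i, j) (by simp [hSdef, hsp])
          simp only at hle
          have h2 : -(|v i j|) ≤ v i j := neg_abs_le _
          rw [hwapp]
          nlinarith
        · have h0 : suppTab n F i j = 0 := by
            have := supp_le_one (F := F) i j; omega
          rw [hsupp i j h0]
      · intro k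
        rw [hwdef, hsum_add, hsum_smul, (mem_tesler.mp hzP).2.2 k, hv.2 k]
        ring
    have hwF : w ∈ F := by
      rw [face_eq hF hexp]
      exact ⟨hwP, hsupp⟩
    have hmem : w -ᵥ z ∈ vectorSpan ℝ F := vsub_mem_vectorSpan ℝ hwF hzF
    have hws : w -ᵥ z = ε • v := by
      funext i j
      show w i j - z i j = ε * v i j
      rw [hwapp]; ring
    rw [hws] at hmem
    have hfin := Submodule.smul_mem (vectorSpan ℝ F) (ε⁻¹) hmem
    rwa [smul_smul, inv_mul_cancel₀ (ne_of_gt hε), one_smul] at hfin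

end TeslerAux


open TeslerAux in
/-- The support map `φ : F ↦ suppTab F` is an isomorphism from the poset of
(nonempty, exposed) faces of `Tes_n(a)`, ordered by inclusion, onto the poset of
`a`-Tesler tableaux ordered componentwise; moreover it sends the affine dimension of
a face to the dimension of the corresponding tableau. -/
theorem face_poset_isomorphism (n : ℕ) (a : Fin n → ℕ) :
    (∀ F : Set (Fin n → Fin n → ℝ), F.Nonempty → IsExposed ℝ (TeslerPolytope n a) F →
      IsTeslerTableau n a (suppTab n F)) ∧
    Set.BijOn (suppTab n)
      {F : Set (Fin n → Fin n → ℝ) | F.Nonempty ∧ IsExposed ℝ (TeslerPolytope n a) F}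
      {T : Fin n → Fin n → ℕ | IsTeslerTableau n a T} ∧
    (∀ F₁ F₂ : Set (Fin n → Fin n → ℝ),
      (F₁.Nonempty ∧ IsExposed ℝ (TeslerPolytope n a) F₁) →
      (F₂.Nonempty ∧ IsExposed ℝ (TeslerPolytope n a) F₂) →
      (F₁ ⊆ F₂ ↔ ∀ i j : Fin n, suppTab n F₁ i j ≤ suppTab n F₂ i j)) ∧
    (∀ F : Set (Fin n → Fin n → ℝ), F.Nonempty → IsExposed ℝ (TeslerPolytope n a) F →
      Module.finrank ℝ (affineSpan ℝ F).direction = tabDim n (suppTab n F)) := by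
  refine ⟨fun F hne hexp => part1 hne hexp.subset, ⟨?_, ?_, ?_⟩, ?_, ?_⟩
  · rintro F ⟨hne, hexp⟩
    exact part1 hne hexp.subset
  · rintro F₁ ⟨h1, e1⟩ F₂ ⟨h2, e2⟩ heq
    rw [face_eq h1 e1, heq]
    exact (face_eq h2 e2).symm
  · rintro T hT
    exact ⟨faceOf a T, ⟨faceOf_nonempty hT, faceOf_exposed⟩, suppTab_faceOf hT⟩
  · rintro F₁ F₂ ⟨h1, e1⟩ ⟨h2, e2⟩
    constructor
    · intro hsub i j
      by_cases h : suppTab n F₂ i j = 0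
      · have h0 : suppTab n F₁ i j = 0 :=
          supp0_iff.mpr fun x hx => supp0_iff.mp h x (hsub hx)
        omega
      · have hb1 := supp_le_one (F := F₂) i j
        have hb2 := supp_le_one (F := F₁) i j
        omega
    · intro hle x hx
      rw [face_eq h2 e2]
      refine ⟨e1.subset hx, fun i j h => ?_⟩
      have h1' : suppTab n F₁ i j = 0 := by have := hle i j; omega
      exact supp0_iff.mp h1' x hx
  · intro F hne hexp
    rw [direction_affineSpan, vspan_eq hne hexp]
    exact finrank_Wsp (part1 hne hexp.subset)
end

section
/- Let a = (a_1,…,a_n) be a vector of nonnegative integers with a_1 > 0. Then the Tesler polytope Tes_n(a) has affine dimension equal to the binomial coefficient C(n,2) = n(n−1)/2. -/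
open Finset

section aux
variable {n : ℕ}

def rowS (k : Fin n) (x : Fin n → Fin n → ℝ) : ℝ := ∑ j ∈ univ.filter (fun j => k ≤ j), x k j
def colS (k : Fin n) (x : Fin n → Fin n → ℝ) : ℝ := ∑ i ∈ univ.filter (fun i => i < k), x i k

lemma rowS_add (k : Fin n) (x y : Fin n → Fin n → ℝ) : rowS k (x + y) = rowS k x + rowS k y := by
  simp [rowS, Finset.sum_add_distrib]

lemma colS_add (k : Fin n) (x y : Fin n → Fin n → ℝ) : colS k (x + y) = colS k x + colS k y := by
  simp [colS, Finset.sum_add_distrib]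

lemma rowS_sub (k : Fin n) (x y : Fin n → Fin n → ℝ) : rowS k (x - y) = rowS k x - rowS k y := by
  simp [rowS, Finset.sum_sub_distrib]

lemma colS_sub (k : Fin n) (x y : Fin n → Fin n → ℝ) : colS k (x - y) = colS k x - colS k y := by
  simp [colS, Finset.sum_sub_distrib]

lemma rowS_smul (c : ℝ) (k : Fin n) (x : Fin n → Fin n → ℝ) : rowS k (c • x) = c * rowS k x := by
  simp [rowS, Finset.mul_sum]

lemma colS_smul (c : ℝ) (k : Fin n) (x : Fin n → Fin n → ℝ) : colS k (c • x) = c * colS k x := by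
  simp [colS, Finset.mul_sum]

/-- The linear space of "Tesler directions". -/
def Wsub (n : ℕ) : Submodule ℝ (Fin n → Fin n → ℝ) where
  carrier := {v | (∀ i j : Fin n, j < i → v i j = 0) ∧ ∀ k : Fin n, rowS k v = colS k v}
  zero_mem' := ⟨fun _ _ _ => rfl, fun k => by simp [rowS, colS]⟩
  add_mem' := by
    rintro x y ⟨hx1, hx2⟩ ⟨hy1, hy2⟩
    refine ⟨fun i j h => ?_, fun k => ?_⟩
    · show x i j + y i j = 0
      rw [hx1 i j h, hy1 i j h, add_zero]
    · rw [rowS_add, colS_add, hx2, hy2]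
  smul_mem' := by
    rintro c x ⟨hx1, hx2⟩
    refine ⟨fun i j h => ?_, fun k => ?_⟩
    · show c * x i j = 0
      rw [hx1 i j h, mul_zero]
    · rw [rowS_smul, colS_smul, hx2]

lemma sub_mem_Wsub {a : Fin n → ℕ} {x y : Fin n → Fin n → ℝ}
    (hx : x ∈ TeslerPolytope n a) (hy : y ∈ TeslerPolytope n a) : x - y ∈ Wsub n := by
  obtain ⟨hx1, -, hx3⟩ := hx
  obtain ⟨hy1, -, hy3⟩ := hy
  refine ⟨fun i j h => ?_, fun k => ?_⟩
  · show x i j - y i j = 0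
    rw [hx1 i j h, hy1 i j h, sub_zero]
  · have h1 : rowS k x - colS k x = (a k : ℝ) := hx3 k
    have h2 : rowS k y - colS k y = (a k : ℝ) := hy3 k
    rw [rowS_sub, colS_sub]
    linarith

/-- The index type for strictly upper triangular entries. -/
abbrev UT (n : ℕ) := Σ j : Fin n, Fin (j : ℕ)

lemma card_UT : Fintype.card (UT n) = n.choose 2 := by
  have h := Finset.sum_range_id_mul_two n
  rw [Fintype.card_sigma]
  simp only [Fintype.card_fin]
  have h2 : ∑ x : Fin n, (x : ℕ) = ∑ i ∈ range n, i := Fin.sum_univ_eq_sum_range (fun i => i) n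
  rw [h2, Nat.choose_two_right]
  omega

def UTi (σ : UT n) : Fin n := Fin.castLE σ.1.isLt.le σ.2

lemma UTi_lt (σ : UT n) : UTi σ < σ.1 := by
  simpa [UTi, Fin.lt_def] using σ.2.isLt

lemma UT_ext {σ τ : UT n} (h1 : τ.1 = σ.1) (h2 : UTi τ = UTi σ) : τ = σ := by
  obtain ⟨j, i⟩ := τ
  obtain ⟨j', i'⟩ := σ
  simp only at h1
  subst h1
  simp only [UTi, Fin.ext_iff, Fin.coe_castLE] at h2
  simp [Fin.ext_iff, h2]

/-- Projection of a Tesler direction to its strictly upper triangular coordinates. -/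
def proj (n : ℕ) : Wsub n →ₗ[ℝ] (UT n → ℝ) where
  toFun v := fun σ => (v : Fin n → Fin n → ℝ) (UTi σ) σ.1
  map_add' x y := rfl
  map_smul' c x := rfl

lemma proj_injective : Function.Injective (proj n) := by
  rw [injective_iff_map_eq_zero]
  intro v hv
  have hupper : ∀ p q : Fin n, p < q → (v : Fin n → Fin n → ℝ) p q = 0 := by
    intro p q hpq
    have h := congrFun hv ⟨q, ⟨(p : ℕ), hpq⟩⟩
    have hc : UTi (⟨q, ⟨(p : ℕ), hpq⟩⟩ : UT n) = p := by
      simp [UTi, Fin.ext_iff]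
    simpa [proj, hc] using h
  obtain ⟨h1, h2⟩ := v.2
  apply Subtype.ext
  funext p q
  show (v : Fin n → Fin n → ℝ) p q = 0
  rcases lt_trichotomy p q with h | h | h
  · exact hupper p q h
  · subst h
    have hcol : colS p (v : Fin n → Fin n → ℝ) = 0 := by
      refine Finset.sum_eq_zero fun i hi => ?_
      rw [Finset.mem_filter] at hi
      exact hupper i p hi.2
    have hrow : rowS p (v : Fin n → Fin n → ℝ) = (v : Fin n → Fin n → ℝ) p p := by
      refine Finset.sum_eq_single_of_mem p (by simp) fun q hq hqp => ?_
      rw [Finset.mem_filter] at hq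
      exact hupper p q (lt_of_le_of_ne hq.2 (Ne.symm hqp))
    have h3 := h2 p
    rw [hrow, hcol] at h3
    exact h3
  · exact h1 p q h

/-- The diagonal matrix with entries `a`. -/
def Dmat (n : ℕ) (a : Fin n → ℕ) : Fin n → Fin n → ℝ := fun p q => if p = q then (a p : ℝ) else 0

lemma rowS_Dmat (a : Fin n → ℕ) (k : Fin n) : rowS k (Dmat n a) = (a k : ℝ) := by
  unfold rowS Dmat
  rw [Finset.sum_ite_eq (univ.filter (fun j => k ≤ j)) k (fun _ => (a k : ℝ))]
  simp

lemma colS_Dmat (a : Fin n → ℕ) (k : Fin n) : colS k (Dmat n a) = 0 := by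
  refine Finset.sum_eq_zero fun i hi => ?_
  rw [Finset.mem_filter] at hi
  exact if_neg (ne_of_lt hi.2)

lemma Dmat_mem (a : Fin n → ℕ) : Dmat n a ∈ TeslerPolytope n a := by
  refine ⟨fun i j h => if_neg (ne_of_gt h), fun i j _ => ?_, fun k => ?_⟩
  · unfold Dmat; split <;> positivity
  · show rowS k (Dmat n a) - colS k (Dmat n a) = (a k : ℝ)
    rw [rowS_Dmat, colS_Dmat, sub_zero]

/-- The direction vectors. -/
def wvec (z i j : Fin n) : Fin n → Fin n → ℝ := fun p q =>
  (if p = i ∧ q = j then 1 else 0) + (if p = j ∧ q = j then 1 else 0)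
    - (if p = z ∧ q = z then 1 else 0) + (if ¬i = z ∧ p = z ∧ q = i then 1 else 0)

lemma sum_ind (S : Finset (Fin n)) (c : Prop) [Decidable c] (b : Fin n) :
    ∑ q ∈ S, (if c ∧ q = b then (1 : ℝ) else 0) = if c ∧ b ∈ S then 1 else 0 := by
  by_cases hc : c
  · simp only [hc, true_and]
    exact Finset.sum_ite_eq' S b (fun _ => (1 : ℝ))
  · simp [hc]

lemma sum_ind' (S : Finset (Fin n)) (c : Prop) [Decidable c] (b : Fin n) :
    ∑ p ∈ S, (if p = b ∧ c then (1 : ℝ) else 0) = if c ∧ b ∈ S then 1 else 0 := by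
  by_cases hc : c
  · simp only [hc, and_true, true_and]
    exact Finset.sum_ite_eq' S b (fun _ => (1 : ℝ))
  · simp [hc]

lemma rowS_wvec (z i j k : Fin n) :
    rowS k (wvec z i j) =
      ((if (k = i) ∧ k ≤ j then 1 else 0) + (if (k = j) ∧ k ≤ j then 1 else 0))
        - (if (k = z) ∧ k ≤ z then 1 else 0)
        + (if (¬i = z ∧ k = z) ∧ k ≤ i then 1 else 0) := by
  unfold rowS wvec
  rw [Finset.sum_add_distrib, Finset.sum_sub_distrib, Finset.sum_add_distrib]
  congr 1
  · congr 1
    · congr 1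
      · rw [sum_ind]; simp
      · rw [sum_ind]; simp
    · rw [sum_ind]; simp
  · have he : ∀ q : Fin n, (if ¬i = z ∧ k = z ∧ q = i then (1:ℝ) else 0)
        = (if (¬i = z ∧ k = z) ∧ q = i then 1 else 0) := by
      intro q
      simp only [show (¬i = z ∧ k = z ∧ q = i) ↔ ((¬i = z ∧ k = z) ∧ q = i) from by tauto]
    simp only [he]
    rw [sum_ind]; simp

lemma colS_wvec (z i j k : Fin n) :
    colS k (wvec z i j) =
      ((if (k = j) ∧ i < k then 1 else 0) + (if (k = j) ∧ j < k then 1 else 0))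
        - (if (k = z) ∧ z < k then 1 else 0)
        + (if (¬i = z ∧ k = i) ∧ z < k then 1 else 0) := by
  unfold colS wvec
  rw [Finset.sum_add_distrib, Finset.sum_sub_distrib, Finset.sum_add_distrib]
  congr 1
  · congr 1
    · congr 1
      · rw [sum_ind']; simp
      · rw [sum_ind']; simp
    · rw [sum_ind']; simp
  · have he : ∀ p : Fin n, (if ¬i = z ∧ p = z ∧ k = i then (1:ℝ) else 0)
        = (if p = z ∧ (¬i = z ∧ k = i) then 1 else 0) := by
      intro p
      simp only [show (¬i = z ∧ p = z ∧ k = i) ↔ (p = z ∧ (¬i = z ∧ k = i)) from by tauto]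
    simp only [he]
    rw [sum_ind']; simp

lemma wvec_hook (z i j : Fin n) (hz : ∀ m, z ≤ m) (hij : i < j) (k : Fin n) :
    rowS k (wvec z i j) - colS k (wvec z i j) = 0 := by
  rw [rowS_wvec, colS_wvec]
  have hij' : (i : ℕ) < j := hij
  have hzi : (z : ℕ) ≤ i := hz i
  have hzk : (z : ℕ) ≤ k := hz k
  have hzj : (z : ℕ) ≤ j := hz j
  simp only [Fin.le_def, Fin.lt_def, Fin.ext_iff]
  split_ifs <;> first | (exfalso; omega) | norm_num

lemma Pmem (a : Fin n → ℕ) (z i j : Fin n) (hz : ∀ m, z ≤ m) (hij : i < j)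
    (ha : 0 < a z) : Dmat n a + wvec z i j ∈ TeslerPolytope n a := by
  have hij' : (i : ℕ) < j := hij
  have hzi : (z : ℕ) ≤ i := hz i
  refine ⟨fun p q h => ?_, fun p q h => ?_, fun k => ?_⟩
  · have h' : (q : ℕ) < p := h
    show Dmat n a p q + wvec z i j p q = 0
    have hzq : (z : ℕ) ≤ q := hz q
    unfold Dmat wvec
    simp only [Fin.ext_iff]
    split_ifs <;> first | (exfalso; omega) | norm_num
  · show 0 ≤ Dmat n a p q + wvec z i j p q
    by_cases hpq : p = z ∧ q = z
    · obtain ⟨hp, hq⟩ := hpq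
      rw [hp, hq]
      have h1 : (1 : ℝ) ≤ (a z : ℝ) := by exact_mod_cast ha
      have h2 : (0 : ℝ) ≤ (a z : ℝ) := by positivity
      unfold Dmat wvec
      simp only [Fin.ext_iff]
      split_ifs <;> first | (exfalso; omega) | linarith
    · have h0 : (if p = z ∧ q = z then (1:ℝ) else 0) = 0 := if_neg hpq
      show (0:ℝ) ≤ Dmat n a p q + ((if p = i ∧ q = j then 1 else 0) + (if p = j ∧ q = j then 1 else 0)
        - (if p = z ∧ q = z then 1 else 0) + (if ¬i = z ∧ p = z ∧ q = i then 1 else 0))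
      rw [h0, sub_zero]
      have hind : ∀ (c : Prop) (inst : Decidable c), (0:ℝ) ≤ if c then 1 else 0 := by
        intro c inst; split <;> norm_num
      have hd : (0:ℝ) ≤ Dmat n a p q := by unfold Dmat; split <;> positivity
      exact add_nonneg hd (add_nonneg (add_nonneg (hind _ _) (hind _ _)) (hind _ _))
  · show rowS k (Dmat n a + wvec z i j) - colS k (Dmat n a + wvec z i j) = (a k : ℝ)
    rw [rowS_add, colS_add, rowS_Dmat, colS_Dmat]
    have hw := wvec_hook z i j hz hij k
    linarith

lemma wfam_li (z : Fin n) (hz : ∀ m, z ≤ m) (g : UT n → ℝ)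
    (hg : ∑ σ : UT n, g σ • wvec z (UTi σ) σ.1 = 0) : ∀ σ, g σ = 0 := by
  have hne : ∀ σ : UT n, ¬ σ.1 = z := by
    intro σ h
    have h1 : z ≤ UTi σ := hz _
    have h2 : UTi σ < σ.1 := UTi_lt σ
    rw [h] at h2
    exact absurd (lt_of_le_of_lt h1 h2) (lt_irrefl z)
  have key : ∀ σ : UT n, (UTi σ = z → ∀ τ : UT n, UTi τ = σ.1 → g τ = 0) → g σ = 0 := by
    intro σ hτ
    have h1 : ∑ τ : UT n, g τ * wvec z (UTi τ) τ.1 (UTi σ) σ.1 = 0 := by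
      have hc := congrFun (congrFun hg (UTi σ)) σ.1
      simpa using hc
    have h2 : ∑ τ : UT n, g τ * wvec z (UTi τ) τ.1 (UTi σ) σ.1 = g σ := by
      rw [Finset.sum_eq_single σ]
      · have hv : wvec z (UTi σ) σ.1 (UTi σ) σ.1 = 1 := by
          have hc2 : ¬(UTi σ = σ.1 ∧ σ.1 = σ.1) := by
            rintro ⟨hc, -⟩
            exact absurd hc (ne_of_lt (UTi_lt σ))
          have hc3 : ¬(UTi σ = z ∧ σ.1 = z) := by
            rintro ⟨-, hc⟩
            exact hne σ hc
          have hc4 : ¬(¬UTi σ = z ∧ UTi σ = z ∧ σ.1 = UTi σ) := by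
            rintro ⟨hc, hc', -⟩
            exact hc hc'
          unfold wvec
          rw [if_pos ⟨rfl, rfl⟩, if_neg hc2, if_neg hc3, if_neg hc4]
          norm_num
        rw [hv, mul_one]
      · intro τ _ hτσ
        by_cases h4 : ¬UTi τ = z ∧ UTi σ = z ∧ σ.1 = UTi τ
        · rw [hτ h4.2.1 τ h4.2.2.symm, zero_mul]
        · have hc1 : ¬(UTi σ = UTi τ ∧ σ.1 = τ.1) := by
            rintro ⟨hc, hc'⟩
            exact hτσ (UT_ext hc'.symm hc.symm)
          have hc2 : ¬(UTi σ = τ.1 ∧ σ.1 = τ.1) := by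
            rintro ⟨hc, hc'⟩
            rw [← hc'] at hc
            exact absurd hc (ne_of_lt (UTi_lt σ))
          have hc3 : ¬(UTi σ = z ∧ σ.1 = z) := by
            rintro ⟨-, hc⟩
            exact hne σ hc
          have hv : wvec z (UTi τ) τ.1 (UTi σ) σ.1 = 0 := by
            unfold wvec
            rw [if_neg hc1, if_neg hc2, if_neg hc3, if_neg h4]
            norm_num
          rw [hv, mul_zero]
      · intro hσ
        exact absurd (Finset.mem_univ σ) hσ
    rw [h2] at h1
    exact h1
  have stage1 : ∀ σ : UT n, ¬ UTi σ = z → g σ = 0 := by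
    intro σ h
    exact key σ (fun hz' => absurd hz' h)
  intro σ
  refine key σ (fun hσz τ hτ => ?_)
  refine stage1 τ ?_
  rw [hτ]
  exact hne σ

end aux

/-- If `a₁ > 0`, the Tesler polytope `Tes_n(a)` has affine dimension `n choose 2`. -/
theorem teslerPolytope_dim (n : ℕ) (hn : 0 < n) (a : Fin n → ℕ) (ha : 0 < a ⟨0, hn⟩) :
    Module.finrank ℝ (affineSpan ℝ (TeslerPolytope n a)).direction = n.choose 2 := by
  classical
  set z : Fin n := ⟨0, hn⟩ with hzdef
  have hz : ∀ m : Fin n, z ≤ m := by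
    intro m
    simp [hzdef, Fin.le_def]
  have hdirle : (affineSpan ℝ (TeslerPolytope n a)).direction ≤ Wsub n := by
    rw [direction_affineSpan, vectorSpan_def, Submodule.span_le]
    rintro v hv
    rw [Set.mem_vsub] at hv
    obtain ⟨x, hx, y, hy, rfl⟩ := hv
    exact sub_mem_Wsub hx hy
  have hle1 : Module.finrank ℝ (affineSpan ℝ (TeslerPolytope n a)).direction ≤ n.choose 2 := by
    calc Module.finrank ℝ (affineSpan ℝ (TeslerPolytope n a)).direction
        ≤ Module.finrank ℝ (Wsub n) := Submodule.finrank_mono hdirle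
      _ ≤ Module.finrank ℝ (UT n → ℝ) := LinearMap.finrank_le_finrank_of_injective proj_injective
      _ = Fintype.card (UT n) := Module.finrank_fintype_fun_eq_card ℝ
      _ = n.choose 2 := card_UT
  set fam : UT n → (Fin n → Fin n → ℝ) := fun σ => wvec z (UTi σ) σ.1 with hfamdef
  have hfammem : ∀ σ, fam σ ∈ (affineSpan ℝ (TeslerPolytope n a)).direction := by
    intro σ
    have h1 : Dmat n a ∈ TeslerPolytope n a := Dmat_mem a
    have h2 : Dmat n a + fam σ ∈ TeslerPolytope n a := Pmem a z (UTi σ) σ.1 hz (UTi_lt σ) ha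
    have h3 := AffineSubspace.vsub_mem_direction
      (subset_affineSpan ℝ (TeslerPolytope n a) h2) (subset_affineSpan ℝ (TeslerPolytope n a) h1)
    have h4 : (Dmat n a + fam σ) -ᵥ Dmat n a = fam σ := add_sub_cancel_left _ _
    rwa [h4] at h3
  have hspan : Submodule.span ℝ (Set.range fam) ≤ (affineSpan ℝ (TeslerPolytope n a)).direction :=
    Submodule.span_le.2 (Set.range_subset_iff.2 hfammem)
  have hli : LinearIndependent ℝ fam := by
    rw [Fintype.linearIndependent_iff]
    intro g hg
    exact wfam_li z hz g hg
  have hge : n.choose 2 ≤ Module.finrank ℝ (affineSpan ℝ (TeslerPolytope n a)).direction := by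
    calc n.choose 2 = Fintype.card (UT n) := card_UT.symm
      _ = Module.finrank ℝ (Submodule.span ℝ (Set.range fam)) := (finrank_span_eq_card hli).symm
      _ ≤ Module.finrank ℝ (affineSpan ℝ (TeslerPolytope n a)).direction :=
          Submodule.finrank_mono hspan
  omega
end
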